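/- arXiv:2605.15402 — 10 statements merged into one kernel-verified Lean document; each statement's English description precedes it below -/
import Mathlib

section
/- Let C be a symmetric monoidal category and X an object with a copoint w : X → 1 and all equalisers of symmetries on X^{⊗n}. Let f : Z → X^ω be a morphism into the limit of the delete chain that equalises all finitely supported symmetries on X^ω. Then for every n, π_{≤n} ∘ f : Z → X^{⊗n} equalises all symmetries on X^{⊗n}, and moreover the induced factorisations (π_{≤n} ∘ f)^† : Z → M_n X form a cone over the draw-and-delete chain. -/
open CategoryTheory MonoidalCategory

universe u v

/-- Let `(X, w)` be a `1`-copointed object of a symmetric monoidal category, with tensor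
powers `pow n = X^{⊗n}`, symmetries `sym n σ`, discard morphisms `d n = X^{⊗n} ⊗ w`,
limit `(Xω, π)` of the delete chain, equalisers of symmetries `(M n, eq n)`,
draw-and-delete morphisms `DD n` (with `eq n ∘ DD n = d n ∘ eq (n+1)`), and finitely
supported symmetries `σ̇ = finSym n σ : Xω ⟶ Xω` (with `π n ∘ σ̇ = sym n σ ∘ π n`).
If `f : Z ⟶ Xω` equalises all finitely supported symmetries, then each `π n ∘ f`
equalises all symmetries on `X^{⊗n}`, and the induced factorisations
`(π n ∘ f)† : Z ⟶ M n` form a cone over the draw-and-delete chain. -/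
theorem stmt_2 {C : Type u} [Category.{v} C] [MonoidalCategory C] [SymmetricCategory C]
    (X : C) (w : X ⟶ 𝟙_ C)
    (pow : ℕ → C) (sym : ∀ n, Equiv.Perm (Fin n) → (pow n ⟶ pow n))
    (d : ∀ n, pow (n + 1) ⟶ pow n)
    (Xω : C) (π : ∀ n, Xω ⟶ pow n) (hπ : ∀ n, π (n + 1) ≫ d n = π n)
    (M : ℕ → C) (eqn : ∀ n, M n ⟶ pow n)
    (heq : ∀ n σ, eqn n ≫ sym n σ = eqn n)
    (huniv : ∀ n (Z : C) (g : Z ⟶ pow n), (∀ σ, g ≫ sym n σ = g) →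
      ∃! h : Z ⟶ M n, h ≫ eqn n = g)
    (DD : ∀ n, M (n + 1) ⟶ M n)
    (hDD : ∀ n, DD n ≫ eqn n = eqn (n + 1) ≫ d n)
    (finSym : ∀ n, Equiv.Perm (Fin n) → (Xω ⟶ Xω))
    (hfinSym : ∀ n σ, finSym n σ ≫ π n = π n ≫ sym n σ)
    (Z : C) (f : Z ⟶ Xω) (hf : ∀ n σ, f ≫ finSym n σ = f) :
    (∀ n σ, (f ≫ π n) ≫ sym n σ = f ≫ π n) ∧
    ∃ g : ∀ n, Z ⟶ M n,
      (∀ n, g n ≫ eqn n = f ≫ π n) ∧ ∀ n, g (n + 1) ≫ DD n = g n := by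
  have h1 : ∀ n σ, (f ≫ π n) ≫ sym n σ = f ≫ π n := by
    intro n σ
    rw [Category.assoc, ← hfinSym, ← Category.assoc, hf]
  refine ⟨h1, ?_⟩
  choose g hg hu using fun n => huniv n Z (f ≫ π n) (h1 n)
  refine ⟨g, hg, fun n => ?_⟩
  apply hu
  rw [Category.assoc, hDD, ← Category.assoc, hg, Category.assoc, hπ]
end

section
/- Let C be a symmetric monoidal category, X an object with copoint w : X → 1, such that the limit X^ω of the delete chain exists and equalisers of symmetries M_n X exist. Given a cone (f_n : Z → M_n X)_{n∈ℕ} over the draw-and-delete chain, the induced morphism f^ω : Z → X^ω (obtained from the cone (eq_n ∘ f_n : Z → X^{⊗n}) on the delete chain) equalises all finitely supported symmetries on X^ω. -/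
open CategoryTheory MonoidalCategory

universe u v

/-- Same setting as before: `(X,w)` a `1`-copointed object with tensor powers `pow n`,
symmetries `sym n σ`, discard morphisms `d n`, limit `(Xω, π)` of the delete chain (also
a limit of every truncated delete chain, whence the joint-monicity hypothesis),
equalisers of symmetries `(M n, eqn n)`, draw-and-delete morphisms `DD n`, and finitely
supported symmetries `finSym n σ` determined layerwise by lifted permutations.
Given a cone `(f n : Z ⟶ M n)` over the draw-and-delete chain, the induced morphism
`f^ω : Z ⟶ Xω` (factorising the cone `(eqn n ∘ f n)` over the delete chain) equalises
all finitely supported symmetries on `Xω`. -/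
theorem stmt_3 {C : Type u} [Category.{v} C] [MonoidalCategory C] [SymmetricCategory C]
    (X : C) (w : X ⟶ 𝟙_ C)
    (pow : ℕ → C) (sym : ∀ n, Equiv.Perm (Fin n) → (pow n ⟶ pow n))
    (d : ∀ n, pow (n + 1) ⟶ pow n)
    (Xω : C) (π : ∀ n, Xω ⟶ pow n) (hπ : ∀ n, π (n + 1) ≫ d n = π n)
    (hπlim : ∀ (Z : C) (c : ∀ n, Z ⟶ pow n), (∀ n, c (n + 1) ≫ d n = c n) →
      ∃! u : Z ⟶ Xω, ∀ n, u ≫ π n = c n)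
    (hπjoint : ∀ (Z : C) (u v : Z ⟶ Xω) (N : ℕ),
      (∀ m, N ≤ m → u ≫ π m = v ≫ π m) → u = v)
    (M : ℕ → C) (eqn : ∀ n, M n ⟶ pow n)
    (heq : ∀ n σ, eqn n ≫ sym n σ = eqn n)
    (DD : ∀ n, M (n + 1) ⟶ M n)
    (hDD : ∀ n, DD n ≫ eqn n = eqn (n + 1) ≫ d n)
    (finSym : ∀ n, Equiv.Perm (Fin n) → (Xω ⟶ Xω))
    (hfinSym : ∀ (n : ℕ) (σ : Equiv.Perm (Fin n)) (m : ℕ), n ≤ m →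
      ∃ τ : Equiv.Perm (Fin m), finSym n σ ≫ π m = π m ≫ sym m τ)
    (Z : C) (f : ∀ n, Z ⟶ M n) (hf : ∀ n, f (n + 1) ≫ DD n = f n) :
    ∃ fω : Z ⟶ Xω, (∀ n, fω ≫ π n = f n ≫ eqn n) ∧
      ∀ n σ, fω ≫ finSym n σ = fω := by
  obtain ⟨fω, hfω, -⟩ := hπlim Z (fun n => f n ≫ eqn n) (fun n => by
    rw [Category.assoc, ← hDD, ← Category.assoc, hf])
  refine ⟨fω, hfω, fun n σ => hπjoint Z _ _ n fun m hm => ?_⟩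
  obtain ⟨τ, hτ⟩ := hfinSym n σ m hm
  rw [Category.assoc, hτ, ← Category.assoc, hfω, Category.assoc, heq]
end

section
/- In a symmetric monoidal category, for a 1-copointed object (X, w) such that the draw-and-delete chain over (X,w) can be built and the delete chain has a limit X^ω, the draw-and-delete chain has a limit if and only if the equaliser of all finitely supported symmetries on X^ω exists, and in that case the two limits are isomorphic. -/
open CategoryTheory MonoidalCategory

universe u v

/-- For a `1`-copointed object `(X,w)` in a symmetric monoidal category such that the
draw-and-delete chain over `(X,w)` can be built (tensor powers `pow n`, symmetries
`sym n σ`, equalisers of symmetries `(M n, eqn n)` and draw-and-delete morphisms `DD n`)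
and the delete chain has a limit `(Xω, π)` (so that the finitely supported symmetries
`finSym n σ` on `Xω` are defined), the draw-and-delete chain has a limit if and only if
the equaliser of all finitely supported symmetries on `Xω` exists; and in that case the
two limits are isomorphic. -/
theorem stmt_4 {C : Type u} [Category.{v} C] [MonoidalCategory C] [SymmetricCategory C]
    (X : C) (w : X ⟶ 𝟙_ C)
    (pow : ℕ → C) (sym : ∀ n, Equiv.Perm (Fin n) → (pow n ⟶ pow n))
    (d : ∀ n, pow (n + 1) ⟶ pow n)
    (Xω : C) (π : ∀ n, Xω ⟶ pow n) (hπ : ∀ n, π (n + 1) ≫ d n = π n)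
    (hπlim : ∀ (Z : C) (c : ∀ n, Z ⟶ pow n), (∀ n, c (n + 1) ≫ d n = c n) →
      ∃! u : Z ⟶ Xω, ∀ n, u ≫ π n = c n)
    (hπjoint : ∀ (Z : C) (u v : Z ⟶ Xω) (N : ℕ),
      (∀ m, N ≤ m → u ≫ π m = v ≫ π m) → u = v)
    (M : ℕ → C) (eqn : ∀ n, M n ⟶ pow n)
    (heq : ∀ n σ, eqn n ≫ sym n σ = eqn n)
    (huniv : ∀ n (Z : C) (g : Z ⟶ pow n), (∀ σ, g ≫ sym n σ = g) →
      ∃! h : Z ⟶ M n, h ≫ eqn n = g)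
    (DD : ∀ n, M (n + 1) ⟶ M n)
    (hDD : ∀ n, DD n ≫ eqn n = eqn (n + 1) ≫ d n)
    (finSym : ∀ n, Equiv.Perm (Fin n) → (Xω ⟶ Xω))
    (hfinSym : ∀ n σ, finSym n σ ≫ π n = π n ≫ sym n σ)
    (hfinSymLift : ∀ (n : ℕ) (σ : Equiv.Perm (Fin n)) (m : ℕ), n ≤ m →
      ∃ τ : Equiv.Perm (Fin m), finSym n σ ≫ π m = π m ≫ sym m τ) :
    ((∃ (L : C) (ρ : ∀ n, L ⟶ M n), (∀ n, ρ (n + 1) ≫ DD n = ρ n) ∧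
        ∀ (Z : C) (c : ∀ n, Z ⟶ M n), (∀ n, c (n + 1) ≫ DD n = c n) →
          ∃! u : Z ⟶ L, ∀ n, u ≫ ρ n = c n) ↔
      (∃ (L' : C) (e : L' ⟶ Xω), (∀ n σ, e ≫ finSym n σ = e) ∧
        ∀ (Z : C) (h : Z ⟶ Xω), (∀ n σ, h ≫ finSym n σ = h) →
          ∃! u : Z ⟶ L', u ≫ e = h)) ∧
    (∀ (L : C) (ρ : ∀ n, L ⟶ M n) (L' : C) (e : L' ⟶ Xω),
      ((∀ n, ρ (n + 1) ≫ DD n = ρ n) ∧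
        ∀ (Z : C) (c : ∀ n, Z ⟶ M n), (∀ n, c (n + 1) ≫ DD n = c n) →
          ∃! u : Z ⟶ L, ∀ n, u ≫ ρ n = c n) →
      ((∀ n σ, e ≫ finSym n σ = e) ∧
        ∀ (Z : C) (h : Z ⟶ Xω), (∀ n σ, h ≫ finSym n σ = h) →
          ∃! u : Z ⟶ L', u ≫ e = h) →
      Nonempty (L ≅ L')) := by
  classical
  have eqn_mono : ∀ (n : ℕ) (Z : C) (a b : Z ⟶ M n), a ≫ eqn n = b ≫ eqn n → a = b := by
    intro n Z a b hab
    obtain ⟨h, hh, hu⟩ := huniv n Z (b ≫ eqn n)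
      (fun σ => by rw [Category.assoc, heq])
    rw [hu a hab, hu b rfl]
  have mkcone : ∀ (Z : C) (h : Z ⟶ Xω), (∀ n σ, h ≫ finSym n σ = h) →
      ∃ c : ∀ n, Z ⟶ M n, (∀ n, c n ≫ eqn n = h ≫ π n) ∧ ∀ n, c (n + 1) ≫ DD n = c n := by
    intro Z h hinv
    have hg : ∀ n σ, (h ≫ π n) ≫ sym n σ = h ≫ π n := by
      intro n σ
      rw [Category.assoc, ← hfinSym, ← Category.assoc, hinv]
    choose c hc _ using fun n => huniv n Z (h ≫ π n) (hg n)
    refine ⟨c, hc, fun n => eqn_mono n Z _ _ ?_⟩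
    rw [Category.assoc, hDD, ← Category.assoc, hc, Category.assoc, hπ, hc]
  have mkh : ∀ (Z : C) (c : ∀ n, Z ⟶ M n), (∀ n, c (n + 1) ≫ DD n = c n) →
      ∃ h : Z ⟶ Xω, (∀ n, h ≫ π n = c n ≫ eqn n) ∧ ∀ n σ, h ≫ finSym n σ = h := by
    intro Z c hc
    obtain ⟨h, hh, -⟩ := hπlim Z (fun n => c n ≫ eqn n) (fun n => by
      rw [Category.assoc, ← hDD, ← Category.assoc, hc])
    refine ⟨h, hh, fun n σ => hπjoint Z _ _ n (fun m hm => ?_)⟩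
    obtain ⟨τ, hτ⟩ := hfinSymLift n σ m hm
    rw [Category.assoc, hτ, ← Category.assoc, hh m, Category.assoc, heq, ← hh m]
  have fwd : ∀ (L : C) (ρ : ∀ n, L ⟶ M n),
      (∀ n, ρ (n + 1) ≫ DD n = ρ n) →
      (∀ (Z : C) (c : ∀ n, Z ⟶ M n), (∀ n, c (n + 1) ≫ DD n = c n) →
        ∃! u : Z ⟶ L, ∀ n, u ≫ ρ n = c n) →
      ∃ e : L ⟶ Xω, (∀ n, e ≫ π n = ρ n ≫ eqn n) ∧ (∀ n σ, e ≫ finSym n σ = e) ∧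
        ∀ (Z : C) (h : Z ⟶ Xω), (∀ n σ, h ≫ finSym n σ = h) →
          ∃! u : Z ⟶ L, u ≫ e = h := by
    intro L ρ hρ hlim
    obtain ⟨e, he, heinv⟩ := mkh L ρ hρ
    refine ⟨e, he, heinv, fun Z h hinv => ?_⟩
    obtain ⟨c, hc, hcc⟩ := mkcone Z h hinv
    obtain ⟨u, hu, huu⟩ := hlim Z c hcc
    refine ⟨u, hπjoint Z _ _ 0 (fun m _ => ?_), fun v hv => huu v (fun n => eqn_mono n Z _ _ ?_)⟩
    · rw [Category.assoc, he, ← Category.assoc, hu, hc]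
    · rw [Category.assoc, ← he, ← Category.assoc, hv, hc]
  have bwd : ∀ (L' : C) (e : L' ⟶ Xω),
      (∀ n σ, e ≫ finSym n σ = e) →
      (∀ (Z : C) (h : Z ⟶ Xω), (∀ n σ, h ≫ finSym n σ = h) →
        ∃! u : Z ⟶ L', u ≫ e = h) →
      ∃ ρ : ∀ n, L' ⟶ M n, (∀ n, ρ (n + 1) ≫ DD n = ρ n) ∧
        ∀ (Z : C) (c : ∀ n, Z ⟶ M n), (∀ n, c (n + 1) ≫ DD n = c n) →
          ∃! u : Z ⟶ L', ∀ n, u ≫ ρ n = c n := by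
    intro L' e heinv hequniv
    obtain ⟨ρ, hρe, hρ⟩ := mkcone L' e heinv
    refine ⟨ρ, hρ, fun Z c hc => ?_⟩
    obtain ⟨h, hh, hinv⟩ := mkh Z c hc
    obtain ⟨u, hu, huu⟩ := hequniv Z h hinv
    refine ⟨u, fun n => eqn_mono n Z _ _ ?_,
      fun v hv => huu v (hπjoint Z _ _ 0 (fun m _ => ?_))⟩
    · rw [Category.assoc, hρe, ← Category.assoc, hu, hh]
    · rw [Category.assoc, ← hρe, ← Category.assoc, hv, ← hh]
  constructor
  · constructor
    · rintro ⟨L, ρ, hρ, hlim⟩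
      obtain ⟨e, -, heinv, hequniv⟩ := fwd L ρ hρ hlim
      exact ⟨L, e, heinv, hequniv⟩
    · rintro ⟨L', e, heinv, hequniv⟩
      obtain ⟨ρ, hρ, hlim⟩ := bwd L' e heinv hequniv
      exact ⟨L', ρ, hρ, hlim⟩
  · rintro L ρ L' e ⟨hρ, hlim⟩ ⟨heinv, hequniv⟩
    obtain ⟨eL, heL, heLinv, hLuniv⟩ := fwd L ρ hρ hlim
    obtain ⟨u, hu, -⟩ := hequniv L eL heLinv
    obtain ⟨v, hv, -⟩ := hLuniv L' e heinv
    refine ⟨⟨u, v, ?_, ?_⟩⟩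
    · obtain ⟨w', hw', hwu⟩ := hLuniv L eL heLinv
      rw [hwu (u ≫ v) (by show (u ≫ v) ≫ eL = eL; rw [Category.assoc, hv, hu]), hwu (𝟙 L) (by simp)]
    · obtain ⟨w', hw', hwu⟩ := hequniv L' e heinv
      rw [hwu (v ≫ u) (by show (v ≫ u) ≫ e = e; rw [Category.assoc, hu, hv]), hwu (𝟙 L') (by simp)]
end

section
/- Let X be a standard Borel space with a measurable total order, and for n ∈ ℕ let eq_n : M_n X → X^n be the Markov kernel defined as eq_n = (1/n!) Σ_{σ∈S_n} σ̇ ∘ ord, where ord orders a size-n multiset and σ̇ permutes coordinates. Let coeq_n : X^n → M_n X be the (deterministic) kernel sending a tuple to its underlying multiset. Then eq_n ∘ coeq_n = (1/n!) Σ_{σ∈S_n} σ̇ as kernels X^n → X^n. -/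
open ProbabilityTheory MeasureTheory
open scoped ENNReal

/-- Scalar multiple of a kernel by a constant in `ℝ≥0∞`. -/
noncomputable def ksmul {α β : Type*} [MeasurableSpace α] [MeasurableSpace β]
    (c : ℝ≥0∞) (κ : Kernel α β) : Kernel α β :=
  ⟨fun a => c • κ a, Measure.measurable_of_measurable_coe _ (fun s hs => by
    simpa [Measure.smul_apply, smul_eq_mul] using (κ.measurable_coe hs).const_mul c)⟩

/-- The quotient map `X^n → M_n X` sending a tuple to its underlying multiset of size `n`. -/
def coeqFun {X : Type*} (n : ℕ) : (Fin n → X) → Sym X n :=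
  fun a => ⟨(List.ofFn a : Multiset X), by simp⟩

/-- `M_n X`, the space of size-`n` multisets over `X`, carries the quotient σ-algebra
induced by the map `coeqFun`. -/
noncomputable instance symMeasurableSpace {X : Type*} [MeasurableSpace X] (n : ℕ) :
    MeasurableSpace (Sym X n) :=
  MeasurableSpace.map (coeqFun n) inferInstance

theorem coeqFun_measurable {X : Type*} [MeasurableSpace X] (n : ℕ) :
    Measurable (coeqFun (X := X) n) := fun _ h => h

/-- The deterministic kernel permuting the coordinates of a tuple according to `σ`. -/
noncomputable def permKernel {X : Type*} [MeasurableSpace X] {n : ℕ}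
    (σ : Equiv.Perm (Fin n)) : Kernel (Fin n → X) (Fin n → X) :=
  Kernel.deterministic (fun a => a ∘ σ) (by fun_prop)

/-- The kernel `eq_n = (1/n!) Σ_{σ ∈ S_n} σ̇ ∘ ord : M_n X → X^n`. -/
noncomputable def eqKernel {X : Type*} [MeasurableSpace X] (n : ℕ)
    (ord : Sym X n → (Fin n → X)) (hord : Measurable ord) :
    Kernel (Sym X n) (Fin n → X) :=
  ksmul ((n.factorial : ℝ≥0∞))⁻¹
    (∑ σ : Equiv.Perm (Fin n), permKernel σ ∘ₖ Kernel.deterministic ord hord)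

lemma exists_perm_of_multiset_eq {X : Type*} : ∀ {n : ℕ} {f g : Fin n → X},
    (List.ofFn g : Multiset X) = (List.ofFn f : Multiset X) →
    ∃ σ : Equiv.Perm (Fin n), g = f ∘ σ := by
  intro n
  induction n with
  | zero =>
    intro f g _
    exact ⟨1, funext fun i => i.elim0⟩
  | succ n ih =>
    intro f g h
    classical
    obtain ⟨j, hj⟩ : ∃ j, f j = g 0 := by
      have hg0 : g 0 ∈ List.ofFn f := by
        rw [← Multiset.mem_coe, ← h, Multiset.mem_coe]
        rw [List.mem_ofFn]
        exact ⟨0, rfl⟩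
      rw [List.mem_ofFn] at hg0
      exact hg0
    set f' : Fin (n + 1) → X := f ∘ Equiv.swap 0 j with hf'
    have hf'0 : f' 0 = g 0 := by simp [hf', hj]
    have hmult' : (List.ofFn f : Multiset X) = (List.ofFn f' : Multiset X) := by
      have := (Equiv.swap (0 : Fin (n + 1)) j).ofFn_comp_perm f
      exact Quotient.sound this.symm
    have htail : (List.ofFn (g ∘ Fin.succ) : Multiset X)
        = (List.ofFn (f' ∘ Fin.succ) : Multiset X) := by
      have h2 : (List.ofFn g : Multiset X) = (List.ofFn f' : Multiset X) :=
        h.trans hmult'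
      rw [List.ofFn_succ, List.ofFn_succ] at h2
      simp only [← Multiset.cons_coe] at h2
      rw [hf'0] at h2
      have := (Multiset.cons_inj_right (g 0)).mp h2
      exact this
    obtain ⟨τ, hτ⟩ := ih htail
    refine ⟨Equiv.Perm.decomposeFin.symm (j, τ), ?_⟩
    funext i
    refine Fin.cases ?_ (fun i => ?_) i
    · simp [Function.comp, Equiv.Perm.decomposeFin_symm_apply_zero, hj]
    · have := congrFun hτ i
      simp only [Function.comp] at this ⊢
      rw [Equiv.Perm.decomposeFin_symm_apply_succ]
      simpa [hf', Function.comp] using this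

/-- For a standard Borel space `X` with a measurable ordering section `ord` of the
multiset quotient map `coeq_n`, the kernel identity
`eq_n ∘ coeq_n = (1/n!) Σ_{σ ∈ S_n} σ̇` holds on `X^n`. -/
theorem stmt_5 {X : Type*} [MeasurableSpace X] [StandardBorelSpace X] (n : ℕ)
    (ord : Sym X n → (Fin n → X)) (hord : Measurable ord)
    (hsec : ∀ m : Sym X n, coeqFun n (ord m) = m) :
    eqKernel n ord hord ∘ₖ Kernel.deterministic (coeqFun n) (coeqFun_measurable n)
      = ksmul ((n.factorial : ℝ≥0∞))⁻¹ (∑ σ : Equiv.Perm (Fin n), permKernel σ) := by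
  ext a s hs
  rw [Kernel.comp_deterministic_eq_comap, Kernel.comap_apply]
  obtain ⟨τ, hτ⟩ := exists_perm_of_multiset_eq (f := a) (g := ord (coeqFun n a))
    (congrArg Subtype.val (hsec (coeqFun n a)))
  show (((n.factorial : ℝ≥0∞))⁻¹ •
      (∑ σ : Equiv.Perm (Fin n), permKernel σ ∘ₖ Kernel.deterministic ord hord)
        (coeqFun n a)) s
    = (((n.factorial : ℝ≥0∞))⁻¹ • (∑ σ : Equiv.Perm (Fin n), permKernel (X := X) σ) a) s
  congr 1
  rw [Kernel.finset_sum_apply, Kernel.finset_sum_apply]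
  have key : ∀ σ : Equiv.Perm (Fin n),
      (permKernel σ ∘ₖ Kernel.deterministic ord hord) (coeqFun n a)
        = Measure.dirac (a ∘ (τ * σ)) := by
    intro σ
    rw [Kernel.comp_deterministic_eq_comap, Kernel.comap_apply, permKernel,
      Kernel.deterministic_apply]
    congr 1
    rw [hτ]
    funext i
    simp [Function.comp, Equiv.Perm.mul_apply]
  rw [Finset.sum_congr rfl (fun σ _ => key σ)]
  have h2 : ∀ σ : Equiv.Perm (Fin n), permKernel (X := X) σ a = Measure.dirac (a ∘ ⇑σ) :=
    fun σ => Kernel.deterministic_apply _ _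
  simp only [h2]
  have h3 := Equiv.sum_comp (Equiv.mulLeft τ)
    (fun σ : Equiv.Perm (Fin n) => (Measure.dirac (a ∘ ⇑σ) : Measure (Fin n → X)))
  simp only [Equiv.coe_mulLeft, Equiv.Perm.coe_mul] at h3 ⊢
  rw [h3]
end

section
/- Let X be a standard Borel space and n ∈ ℕ. The pair (M_n X, eq_n), where eq_n = (1/n!) Σ_{σ∈S_n} σ̇ ∘ ord, is an equaliser in the category Stoch of measurable spaces and Markov kernels of the family of all coordinate-permutation kernels σ̇ : X^n → X^n for σ ∈ S_n. -/
open ProbabilityTheory MeasureTheory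
open scoped ENNReal

section Aux

variable {α β γ : Type*} [MeasurableSpace α] [MeasurableSpace β] [MeasurableSpace γ]

lemma ksmul_apply (c : ℝ≥0∞) (κ : Kernel α β) (a : α) : ksmul c κ a = c • κ a := rfl

lemma comp_ksmul (κ : Kernel β γ) (c : ℝ≥0∞) (η : Kernel α β) :
    κ ∘ₖ ksmul c η = ksmul c (κ ∘ₖ η) := by
  ext a s hs
  simp only [Kernel.comp_apply' _ _ _ hs, ksmul_apply, Measure.smul_apply, smul_eq_mul,
    lintegral_smul_measure]

lemma ksmul_comp (κ : Kernel β γ) (c : ℝ≥0∞) (η : Kernel α β) :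
    (ksmul c κ) ∘ₖ η = ksmul c (κ ∘ₖ η) := by
  ext a s hs
  simp only [Kernel.comp_apply' _ _ _ hs, ksmul_apply, Measure.smul_apply, smul_eq_mul]
  rw [lintegral_const_mul _ (κ.measurable_coe hs)]

lemma comp_fsum {ι : Type*} (κ : Kernel β γ) (I : Finset ι) (η : ι → Kernel α β) :
    κ ∘ₖ (∑ i ∈ I, η i) = ∑ i ∈ I, κ ∘ₖ η i := by
  ext a s hs
  simp only [Kernel.comp_apply' _ _ _ hs, Kernel.finset_sum_apply,
    Measure.finset_sum_apply, lintegral_finset_sum_measure]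

lemma fsum_comp {ι : Type*} (κ : ι → Kernel β γ) (I : Finset ι) (η : Kernel α β) :
    (∑ i ∈ I, κ i) ∘ₖ η = ∑ i ∈ I, κ i ∘ₖ η := by
  ext a s hs
  simp only [Kernel.comp_apply' _ _ _ hs, Kernel.finset_sum_apply' _ _ _ _]
  rw [lintegral_finset_sum _ (fun i _ => (κ i).measurable_coe hs)]

lemma ksmul_card_sum_const {ι : Type*} [Fintype ι] [Nonempty ι] (κ : Kernel α β) :
    ksmul ((Fintype.card ι : ℝ≥0∞))⁻¹ (∑ _i : ι, κ) = κ := by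
  ext a s hs
  rw [ksmul_apply, Measure.smul_apply, smul_eq_mul, Kernel.finset_sum_apply' _ _ _ _]
  simp only [Finset.sum_const, Finset.card_univ, nsmul_eq_mul]
  rw [← mul_assoc, ENNReal.inv_mul_cancel (by exact_mod_cast Fintype.card_ne_zero)
    (by simp), one_mul]

private lemma exists_comp_perm {α : Type*} {n : ℕ} {a b : Fin n → α}
    (h : (List.ofFn a : Multiset α) = (List.ofFn b : Multiset α)) :
    ∃ σ : Equiv.Perm (Fin n), a ∘ σ = b := by
  letI : LinearOrder α := IsWellOrder.linearOrder WellOrderingRel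
  have hp : (List.ofFn a).Perm (List.ofFn b) := Multiset.coe_eq_coe.1 h
  have h1 : List.ofFn (a ∘ Tuple.sort a) = List.ofFn (b ∘ Tuple.sort b) := by
    exact List.Perm.eq_of_sortedLE
      (Tuple.monotone_sort a).sortedLE_ofFn (Tuple.monotone_sort b).sortedLE_ofFn
      (((Tuple.sort a).ofFn_comp_perm a).trans
        (hp.trans ((Tuple.sort b).ofFn_comp_perm b).symm))
  have h2 : a ∘ Tuple.sort a = b ∘ Tuple.sort b := List.ofFn_injective h1
  refine ⟨Tuple.sort a * (Tuple.sort b)⁻¹, funext fun i => ?_⟩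
  have := congrFun h2 ((Tuple.sort b)⁻¹ i)
  simpa [Function.comp, Equiv.Perm.mul_apply] using this

end Aux

section Main

variable {X : Type*} [MeasurableSpace X] {n : ℕ}

lemma permKernel_comp (σ τ : Equiv.Perm (Fin n)) :
    permKernel (X := X) σ ∘ₖ permKernel τ = permKernel (τ * σ) := by
  rw [permKernel, permKernel, Kernel.deterministic_comp_deterministic]
  rfl

lemma coeqFun_comp_perm (σ : Equiv.Perm (Fin n)) (b : Fin n → X) :
    coeqFun n (b ∘ σ) = coeqFun n b :=
  Subtype.ext (Multiset.coe_eq_coe.2 (σ.ofFn_comp_perm b))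

lemma ord_eq (ord : Sym X n → (Fin n → X)) (hsec : ∀ m : Sym X n, coeqFun n (ord m) = m)
    (a : Fin n → X) : ∃ π : Equiv.Perm (Fin n), ord (coeqFun n a) = a ∘ π := by
  have h : (List.ofFn (ord (coeqFun n a)) : Multiset X) = (List.ofFn a : Multiset X) :=
    congrArg Subtype.val (hsec (coeqFun n a))
  obtain ⟨σ, hσ⟩ := exists_comp_perm h
  refine ⟨σ⁻¹, funext fun i => ?_⟩
  have h2 := congrFun hσ (σ⁻¹ i)
  simpa using h2

/-- the canonical quotient kernel -/
noncomputable def coeqK (X : Type*) [MeasurableSpace X] (n : ℕ) :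
    Kernel (Fin n → X) (Sym X n) :=
  Kernel.deterministic (coeqFun n) (coeqFun_measurable n)

instance (σ : Equiv.Perm (Fin n)) : IsMarkovKernel (permKernel (X := X) σ) := by
  rw [permKernel]; infer_instance

instance : IsMarkovKernel (coeqK X n) := by rw [coeqK]; infer_instance

variable (ord : Sym X n → (Fin n → X)) (hord : Measurable ord)

lemma perm_comp_measurable (σ : Equiv.Perm (Fin n)) :
    Measurable (fun a : Fin n → X => a ∘ σ) := by fun_prop

lemma eq_comp_coeq (hsec : ∀ m : Sym X n, coeqFun n (ord m) = m) :
    eqKernel n ord hord ∘ₖ coeqK X n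
      = ksmul ((n.factorial : ℝ≥0∞))⁻¹ (∑ σ : Equiv.Perm (Fin n), permKernel σ) := by
  rw [eqKernel, ksmul_comp, fsum_comp]
  congr 1
  have hstep : ∀ σ : Equiv.Perm (Fin n),
      (permKernel (X := X) σ ∘ₖ Kernel.deterministic ord hord) ∘ₖ coeqK X n
        = Kernel.deterministic ((fun a => a ∘ σ) ∘ (ord ∘ coeqFun n))
            ((perm_comp_measurable σ).comp (hord.comp (coeqFun_measurable n))) := by
    intro σ
    rw [Kernel.comp_assoc, coeqK, Kernel.deterministic_comp_deterministic, permKernel,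
      Kernel.deterministic_comp_deterministic]
  simp only [hstep]
  ext a s hs
  rw [Kernel.finset_sum_apply' _ _ _ _, Kernel.finset_sum_apply' _ _ _ _]
  obtain ⟨π, hπ⟩ := ord_eq ord hsec a
  refine Fintype.sum_equiv (Equiv.mulLeft π) _ _ fun σ => ?_
  rw [Kernel.deterministic_apply' _ _ hs, permKernel, Kernel.deterministic_apply' _ _ hs]
  congr 1
  show ord (coeqFun n a) ∘ σ = a ∘ (π * σ)
  rw [hπ]
  rfl

lemma coeq_comp_eq (hsec : ∀ m : Sym X n, coeqFun n (ord m) = m) :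
    coeqK X n ∘ₖ eqKernel n ord hord = Kernel.id := by
  rw [eqKernel, comp_ksmul, comp_fsum]
  have hstep : ∀ σ : Equiv.Perm (Fin n),
      coeqK X n ∘ₖ (permKernel (X := X) σ ∘ₖ Kernel.deterministic ord hord)
        = Kernel.id := by
    intro σ
    rw [← Kernel.comp_assoc, coeqK, permKernel, Kernel.deterministic_comp_deterministic,
      Kernel.deterministic_comp_deterministic]
    have hfun : (((coeqFun (X := X) n) ∘ fun a => a ∘ σ) ∘ ord) = id := by
      funext m
      simp only [Function.comp_apply, id_eq]
      rw [coeqFun_comp_perm, hsec]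
    simp only [hfun]
    rfl
  simp only [hstep]
  have : Nonempty (Equiv.Perm (Fin n)) := ⟨1⟩
  have hc := ksmul_card_sum_const (ι := Equiv.Perm (Fin n)) (Kernel.id : Kernel (Sym X n) (Sym X n))
  rwa [Fintype.card_perm, Fintype.card_fin] at hc

instance eqKernel_isMarkov (ord : Sym X n → (Fin n → X)) (hord : Measurable ord) :
    IsMarkovKernel (eqKernel n ord hord) := by
  constructor
  intro m
  constructor
  rw [eqKernel, ksmul_apply, Measure.smul_apply, smul_eq_mul, Kernel.finset_sum_apply' _ _ _ _]
  have h1 : ∀ σ ∈ (Finset.univ : Finset (Equiv.Perm (Fin n))),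
      ((permKernel (X := X) σ ∘ₖ Kernel.deterministic ord hord) m) Set.univ = 1 :=
    fun σ _ => measure_univ
  rw [Finset.sum_congr rfl h1, Finset.sum_const, Finset.card_univ, Fintype.card_perm,
    Fintype.card_fin, nsmul_eq_mul, mul_one,
    ENNReal.inv_mul_cancel (by exact_mod_cast Nat.factorial_ne_zero n) (by simp)]
end Main

/-- `(M_n X, eq_n)` is an equaliser in `Stoch` of the coordinate-permutation kernels
`σ̇ : X^n → X^n`, `σ ∈ S_n`: the Markov kernel `eq_n` equalises all `σ̇`, and every Markov
kernel `f : A → X^n` equalising all `σ̇` factors uniquely through `eq_n` via a Markov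
kernel. -/
theorem stmt_6 {X : Type*} [MeasurableSpace X] [StandardBorelSpace X] (n : ℕ)
    (ord : Sym X n → (Fin n → X)) (hord : Measurable ord)
    (hsec : ∀ m : Sym X n, coeqFun n (ord m) = m) :
    (∀ σ : Equiv.Perm (Fin n), permKernel σ ∘ₖ eqKernel n ord hord = eqKernel n ord hord) ∧
    ∀ (A : Type) (_ : MeasurableSpace A) (f : Kernel A (Fin n → X)), IsMarkovKernel f →
      (∀ σ : Equiv.Perm (Fin n), permKernel σ ∘ₖ f = f) →
      ∃! g : Kernel A (Sym X n),
        IsMarkovKernel g ∧ eqKernel n ord hord ∘ₖ g = f := by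
  haveI : Nonempty (Equiv.Perm (Fin n)) := ⟨1⟩
  constructor
  · intro σ
    rw [eqKernel, comp_ksmul, comp_fsum]
    congr 1
    refine Fintype.sum_equiv (Equiv.mulRight σ) _ _ fun τ => ?_
    rw [← Kernel.comp_assoc, permKernel_comp]
    rfl
  · intro A mA f hfM hf
    haveI := hfM
    have hfac : eqKernel n ord hord ∘ₖ (coeqK X n ∘ₖ f) = f := by
      rw [← Kernel.comp_assoc, eq_comp_coeq ord hord hsec, ksmul_comp, fsum_comp]
      simp only [hf]
      have hc := ksmul_card_sum_const (ι := Equiv.Perm (Fin n)) f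
      rwa [Fintype.card_perm, Fintype.card_fin] at hc
    refine ⟨coeqK X n ∘ₖ f, ⟨inferInstance, hfac⟩, ?_⟩
    rintro g' ⟨hg'M, hg'f⟩
    calc g' = Kernel.id ∘ₖ g' := (Kernel.id_comp g').symm
      _ = (coeqK X n ∘ₖ eqKernel n ord hord) ∘ₖ g' := by rw [coeq_comp_eq ord hord hsec]
      _ = coeqK X n ∘ₖ (eqKernel n ord hord ∘ₖ g') := Kernel.comp_assoc _ _ _
      _ = coeqK X n ∘ₖ f := by rw [hg'f]
end

section
/- Let E be a Polish space and (X₁, X₂, …) an infinite exchangeable sequence of E-valued random variables on a probability space Ω. Define the empirical measures Z_n : Ω → P(E) by Z_n = (1/n) Σ_{i=1}^n δ_{X_i}. Then the family of laws (law(Z_n))_{n∈ℕ} ⊆ P(P(E)) is tight. -/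
open MeasureTheory
open scoped ENNReal

open Filter Topology Set
open scoped NNReal

lemma tsum_half_pow_succ : ∑' n : ℕ, (2 : ℝ≥0∞)⁻¹ ^ (n + 1) = 1 := by
  simp_rw [pow_succ']
  rw [ENNReal.tsum_mul_left, ENNReal.tsum_geometric, ENNReal.one_sub_inv_two, inv_inv]
  exact ENNReal.inv_mul_cancel two_ne_zero ENNReal.ofNat_ne_top

/-- A finite Borel measure on a complete separable metric space is tight. -/
theorem exists_isCompact_compl_le {E : Type*} [MetricSpace E] [CompleteSpace E]
    [SecondCountableTopology E] [Nonempty E] [MeasurableSpace E] [BorelSpace E]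
    (μ : Measure E) [IsFiniteMeasure μ] {c : ℝ≥0∞} (hc : c ≠ 0) :
    ∃ K : Set E, IsCompact K ∧ μ Kᶜ ≤ c := by
  classical
  set D : ℕ → E := TopologicalSpace.denseSeq E with hDdef
  have hD : DenseRange D := TopologicalSpace.denseRange_denseSeq E
  set B : ℕ → ℕ → Set E := fun m N => ⋃ i ∈ Finset.range N,
    Metric.closedBall (D i) (1 / (m + 1 : ℝ)) with hBdef
  have hBclosed : ∀ m N, IsClosed (B m N) := fun m N =>
    (Finset.range N).finite_toSet.isClosed_biUnion fun i _ => Metric.isClosed_closedBall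
  have hBmono : ∀ m, Monotone fun N => B m N := by
    intro m N N' hNN'
    refine Set.biUnion_subset_biUnion_left ?_
    intro i hi
    exact Finset.mem_range.mpr ((Finset.mem_range.mp hi).trans_le hNN')
  have hBunion : ∀ m, (⋃ N, B m N) = univ := by
    intro m
    refine Set.eq_univ_of_forall fun x => ?_
    have hpos : (0 : ℝ) < 1 / (m + 1 : ℝ) := by positivity
    obtain ⟨i, hi⟩ := hD.exists_dist_lt x hpos
    exact mem_iUnion.mpr ⟨i + 1, mem_biUnion (Finset.self_mem_range_succ i)
      (Metric.mem_closedBall.mpr hi.le)⟩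
  have key : ∀ m : ℕ, ∃ N : ℕ, μ (B m N)ᶜ ≤ c * (2 : ℝ≥0∞)⁻¹ ^ (m + 1) := by
    intro m
    have htend : Tendsto (fun N => μ (B m N)ᶜ) atTop (𝓝 (μ (⋂ N, (B m N)ᶜ))) := by
      refine tendsto_measure_iInter_atTop (fun N => (hBclosed m N).measurableSet.compl.nullMeasurableSet)
        (fun N N' h => compl_subset_compl.mpr (hBmono m h)) ⟨0, measure_ne_top μ _⟩
    have hempty : (⋂ N, (B m N)ᶜ) = ∅ := by
      rw [← compl_iUnion, hBunion m, compl_univ]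
    rw [hempty, measure_empty] at htend
    have hpos : (0 : ℝ≥0∞) < c * (2 : ℝ≥0∞)⁻¹ ^ (m + 1) :=
      pos_iff_ne_zero.mpr (mul_ne_zero hc (pow_ne_zero _ (by simp)))
    obtain ⟨N, hN⟩ := (htend.eventually_lt_const hpos).exists
    exact ⟨N, hN.le⟩
  choose N hN using key
  refine ⟨⋂ m, B m (N m), ?_, ?_⟩
  · refine TotallyBounded.isCompact_of_isClosed ?_ (isClosed_iInter fun m => hBclosed m (N m))
    refine Metric.totallyBounded_iff.mpr fun ε hε => ?_
    obtain ⟨m, hm⟩ := exists_nat_one_div_lt hε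
    refine ⟨D '' (Iio (N m)), (Set.finite_Iio _).image D, ?_⟩
    intro x hx
    have hx' : x ∈ B m (N m) := mem_iInter.mp hx m
    obtain ⟨i, hi⟩ := mem_iUnion.mp hx'
    obtain ⟨hiN, hxi⟩ := mem_iUnion.mp hi
    refine mem_biUnion ⟨i, Finset.mem_range.mp hiN, rfl⟩ ?_
    exact Metric.mem_ball.mpr ((Metric.mem_closedBall.mp hxi).trans_lt hm)
  · rw [compl_iInter]
    refine (measure_iUnion_le _).trans ?_
    calc ∑' m, μ (B m (N m))ᶜ ≤ ∑' m, c * (2 : ℝ≥0∞)⁻¹ ^ (m + 1) :=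
          ENNReal.tsum_le_tsum fun m => hN m
      _ = c := by rw [ENNReal.tsum_mul_left, tsum_half_pow_succ, mul_one]

/-- Prokhorov core: on a compact metric space, every sequence of probability measures has a
weakly convergent subsequence. -/
theorem prokhorov_core {H : Type*} [MetricSpace H] [CompactSpace H]
    [SecondCountableTopology H] [Nonempty H] [MeasurableSpace H] [BorelSpace H]
    (ρ : ℕ → ProbabilityMeasure H) :
    ∃ (σ : ProbabilityMeasure H) (φ : ℕ → ℕ), StrictMono φ ∧
      Tendsto (fun j => ρ (φ j)) atTop (𝓝 σ) := by
  classical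
  set D : ℕ → H := TopologicalSpace.denseSeq H with hDdef
  have hD : DenseRange D := TopologicalSpace.denseRange_denseSeq H
  set U : Finset (ℕ × ℚ) → Set H := fun u => ⋃ p ∈ u, Metric.ball (D p.1) (p.2 : ℝ) with hUdef
  set C : Finset (ℕ × ℚ) → Set H := fun u => ⋃ p ∈ u, Metric.closedBall (D p.1) (p.2 : ℝ)
    with hCdef
  have hUopen : ∀ u, IsOpen (U u) := fun u => isOpen_biUnion fun p _ => Metric.isOpen_ball
  have hCclosed : ∀ u, IsClosed (C u) := fun u =>
    (u.finite_toSet).isClosed_biUnion fun p _ => Metric.isClosed_closedBall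
  have hCcompact : ∀ u, IsCompact (C u) := fun u => (hCclosed u).isCompact
  have hUC : ∀ u, U u ⊆ C u := fun u =>
    Set.iUnion₂_mono fun p _ => Metric.ball_subset_closedBall
  have hUunion : ∀ u v, U (u ∪ v) = U u ∪ U v := fun u v => Finset.set_biUnion_union u v _
  have hCunion : ∀ u v, C (u ∪ v) = C u ∪ C v := fun u v => Finset.set_biUnion_union u v _
  -- rational balls fit inside any open set
  have ratball : ∀ (G : Set H), IsOpen G → ∀ x ∈ G, ∃ p : ℕ × ℚ,
      x ∈ Metric.ball (D p.1) (p.2 : ℝ) ∧ Metric.closedBall (D p.1) (p.2 : ℝ) ⊆ G := by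
    intro G hG x hx
    obtain ⟨ε, hε, hball⟩ := Metric.isOpen_iff.mp hG x hx
    obtain ⟨q, hq0, hq⟩ := exists_rat_btwn (half_pos hε)
    have hq0' : (0 : ℝ) < q := by exact_mod_cast hq0
    obtain ⟨n, hn⟩ := hD.exists_dist_lt x hq0'
    refine ⟨(n, q), ?_, ?_⟩
    · simpa [Metric.mem_ball, dist_comm] using hn
    · intro y hy
      apply hball
      have h1 : dist y (D n) ≤ q := Metric.mem_closedBall.mp hy
      have h2 : dist (D n) x < q := by rwa [dist_comm]
      calc dist y x ≤ dist y (D n) + dist (D n) x := dist_triangle _ _ _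
        _ < q + q := by linarith
        _ < ε := by linarith
  -- diagonal extraction
  obtain ⟨Lf, -, φ, hφ, hconv⟩ :
      ∃ Lf ∈ Set.univ.pi (fun _ : Finset (ℕ × ℚ) => Set.Icc (0:ℝ) 1), ∃ φ : ℕ → ℕ,
        StrictMono φ ∧ Tendsto ((fun j u => ((ρ j (U u) : ℝ≥0) : ℝ)) ∘ φ) atTop (𝓝 Lf) := by
    apply (isCompact_univ_pi fun _ => isCompact_Icc).tendsto_subseq
    intro j u _
    exact ⟨(ρ j (U u)).coe_nonneg, by exact_mod_cast (ρ j).apply_le_one _⟩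
  have hL : ∀ u, Tendsto (fun j => ((ρ (φ j) (U u) : ℝ≥0) : ℝ)) atTop (𝓝 (Lf u)) :=
    fun u => tendsto_pi_nhds.mp hconv u
  set Λ : Finset (ℕ × ℚ) → ℝ≥0∞ := fun u => ENNReal.ofReal (Lf u) with hΛdef
  have hΛ : ∀ u, Tendsto (fun j => (ρ (φ j) : Measure H) (U u)) atTop (𝓝 (Λ u)) := by
    intro u
    have h1 := (ENNReal.continuous_ofReal.tendsto (Lf u)).comp (hL u)
    have : (fun j => ENNReal.ofReal ((ρ (φ j) (U u) : ℝ≥0) : ℝ))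
        = fun j => (ρ (φ j) : Measure H) (U u) := by
      funext j
      rw [ENNReal.ofReal_coe_nnreal, ProbabilityMeasure.ennreal_coeFn_eq_coeFn_toMeasure]
    simp only [Function.comp_def] at h1
    rwa [this] at h1
  have hΛle : ∀ u, Λ u ≤ 1 := fun u =>
    le_of_tendsto (hΛ u) (.of_forall fun j => prob_le_one)
  have hΛadd : ∀ u v, Disjoint (U u) (U v) → Λ (u ∪ v) = Λ u + Λ v := by
    intro u v hdisj
    refine tendsto_nhds_unique (hΛ (u ∪ v)) ?_
    have h1 : ∀ j, (ρ (φ j) : Measure H) (U (u ∪ v))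
        = (ρ (φ j) : Measure H) (U u) + (ρ (φ j) : Measure H) (U v) := by
      intro j
      rw [hUunion, measure_union' hdisj (hUopen u).measurableSet]
    simp only [h1]
    exact (hΛ u).add (hΛ v)
  set β : Set H → ℝ≥0∞ := fun G => ⨆ (u) (_ : C u ⊆ G), Λ u with hβdef
  have βmono : ∀ {G G' : Set H}, G ⊆ G' → β G ≤ β G' := fun {G G'} h =>
    iSup₂_le fun u hu => le_iSup₂_of_le u (hu.trans h) le_rfl
  have βle1 : ∀ G, β G ≤ 1 := fun G => iSup₂_le fun u _ => hΛle u
  have Λ_le_β : ∀ {u G}, C u ⊆ G → Λ u ≤ β G := fun {u G} hu => le_iSup₂_of_le u hu le_rfl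
  -- countable subadditivity on open sets
  have βsub : ∀ (G : ℕ → Set H), (∀ n, IsOpen (G n)) → β (⋃ n, G n) ≤ ∑' n, β (G n) := by
    intro G hG
    refine iSup₂_le fun u hu => ?_
    -- cover the compact set `C u` by rational balls subordinate to the `G n`
    have key : ∀ x : H, x ∈ C u → ∃ pn : (ℕ × ℚ) × ℕ,
        x ∈ Metric.ball (D pn.1.1) (pn.1.2 : ℝ) ∧
          Metric.closedBall (D pn.1.1) (pn.1.2 : ℝ) ⊆ G pn.2 := by
      intro x hx
      obtain ⟨n, hn⟩ := mem_iUnion.mp (hu hx)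
      obtain ⟨p, hp1, hp2⟩ := ratball (G n) (hG n) x hn
      exact ⟨(p, n), hp1, hp2⟩
    choose! pn hpn1 hpn2 using key
    set V : H → Set H := fun x => Metric.ball (D (pn x).1.1) ((pn x).1.2 : ℝ) with hVdef
    obtain ⟨t, ht⟩ := (hCcompact u).elim_finite_subcover (fun x : C u => V x)
      (fun x => Metric.isOpen_ball) (fun z hz => mem_iUnion.mpr ⟨⟨z, hz⟩, hpn1 z hz⟩)
    set ns : Finset ℕ := t.image (fun x : C u => (pn (x : H)).2) with hnsdef
    set v : ℕ → Finset (ℕ × ℚ) := fun n =>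
      (t.filter (fun x : C u => (pn (x : H)).2 = n)).image (fun x : C u => (pn (x : H)).1)
      with hvdef
    have hCv : ∀ n, C (v n) ⊆ G n := by
      intro n
      refine Set.iUnion₂_subset fun p hp => ?_
      obtain ⟨x, hx, rfl⟩ := Finset.mem_image.mp hp
      have hx' := (Finset.mem_filter.mp hx).2
      rw [← hx']
      exact hpn2 (↑x : H) x.2
    have hcover : U u ⊆ ⋃ n ∈ ns, U (v n) := by
      refine (hUC u).trans ?_
      intro z hz
      obtain ⟨x, hx⟩ := mem_iUnion.mp (ht hz)
      obtain ⟨hxt, hzV⟩ := mem_iUnion.mp hx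
      have h1 : (pn (x : H)).2 ∈ ns := Finset.mem_image_of_mem _ hxt
      have h2 : (pn (x : H)).1 ∈ v (pn (x : H)).2 :=
        Finset.mem_image.mpr ⟨x, Finset.mem_filter.mpr ⟨hxt, rfl⟩, rfl⟩
      exact mem_biUnion h1 (mem_biUnion h2 hzV)
    have hΛu : Λ u ≤ ∑ n ∈ ns, Λ (v n) := by
      refine le_of_tendsto_of_tendsto' (hΛ u) (tendsto_finset_sum ns fun n _ => hΛ (v n)) ?_
      intro j
      calc (ρ (φ j) : Measure H) (U u) ≤ (ρ (φ j) : Measure H) (⋃ n ∈ ns, U (v n)) :=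
            measure_mono hcover
        _ ≤ ∑ n ∈ ns, (ρ (φ j) : Measure H) (U (v n)) := measure_biUnion_finset_le _ _
    refine hΛu.trans ?_
    calc ∑ n ∈ ns, Λ (v n) ≤ ∑ n ∈ ns, β (G n) := Finset.sum_le_sum fun n _ => Λ_le_β (hCv n)
      _ ≤ ∑' n, β (G n) := ENNReal.sum_le_tsum ns
  -- β of the whole space is 1
  have βuniv : β Set.univ = 1 := by
    refine le_antisymm (βle1 _) ?_
    have key : ∀ x : H, ∃ p : ℕ × ℚ, x ∈ Metric.ball (D p.1) (p.2 : ℝ) := by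
      intro x
      obtain ⟨p, hp, -⟩ := ratball Set.univ isOpen_univ x trivial
      exact ⟨p, hp⟩
    choose pf hpf using key
    obtain ⟨t, ht⟩ := isCompact_univ.elim_finite_subcover
      (fun x : H => Metric.ball (D (pf x).1) ((pf x).2 : ℝ)) (fun _ => Metric.isOpen_ball)
      (fun z _ => mem_iUnion.mpr ⟨z, hpf z⟩)
    set u : Finset (ℕ × ℚ) := t.image pf with hudef
    have hUu : U u = Set.univ := by
      refine Set.eq_univ_of_univ_subset ?_
      intro z hz
      obtain ⟨x, hx⟩ := mem_iUnion.mp (ht hz)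
      obtain ⟨hxt, hzb⟩ := mem_iUnion.mp hx
      exact mem_biUnion (Finset.mem_image_of_mem _ hxt) hzb
    have : Λ u = 1 := by
      refine tendsto_nhds_unique (hΛ u) ?_
      simp only [hUu, measure_univ]
      exact tendsto_const_nhds
    rw [← this]
    exact Λ_le_β (subset_univ _)
  -- the candidate outer measure: infimum over open supersets of β
  set m : Set H → ℝ≥0∞ := fun A => ⨅ (G : Set H) (_ : IsOpen G) (_ : A ⊆ G), β G with hmdef
  have m_le : ∀ {A G : Set H}, IsOpen G → A ⊆ G → m A ≤ β G := fun {A G} hG hAG =>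
    iInf_le_of_le G (iInf_le_of_le hG (iInf_le_of_le hAG le_rfl))
  have le_m : ∀ {A : Set H} {c : ℝ≥0∞}, (∀ G, IsOpen G → A ⊆ G → c ≤ β G) → c ≤ m A :=
    fun {A c} h => le_iInf fun G => le_iInf fun hG => le_iInf fun hAG => h G hG hAG
  have m_open : ∀ {G : Set H}, IsOpen G → m G = β G := fun {G} hG =>
    le_antisymm (m_le hG le_rfl) (le_m fun G' hG' hsub => βmono hsub)
  have m_mono : ∀ {A B : Set H}, A ⊆ B → m A ≤ m B := fun {A B} hAB =>
    le_iInf fun G => le_iInf fun hG => le_iInf fun hBG => m_le hG (hAB.trans hBG)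
  have m_le_one : ∀ A, m A ≤ 1 := fun A => (m_le isOpen_univ (subset_univ A)).trans (βle1 _)
  have βempty : β ∅ = 0 := by
    refine le_antisymm (iSup₂_le fun u hu => ?_) zero_le
    have hU0 : U u = ∅ := eq_empty_of_subset_empty ((hUC u).trans hu)
    have hΛ0 : Λ u = 0 := by
      refine tendsto_nhds_unique (hΛ u) ?_
      simp only [hU0, measure_empty]
      exact tendsto_const_nhds
    exact le_of_eq hΛ0
  have m_empty : m ∅ = 0 := le_antisymm
    ((m_le isOpen_empty (subset_refl _)).trans (le_of_eq βempty)) zero_le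
  have m_subadd : ∀ s : ℕ → Set H, m (⋃ n, s n) ≤ ∑' n, m (s n) := by
    intro s
    refine ENNReal.le_of_forall_pos_le_add fun ε hε hlt => ?_
    have key : ∀ n : ℕ, ∃ G, IsOpen G ∧ s n ⊆ G ∧
        β G ≤ m (s n) + (ε : ℝ≥0∞) * (2 : ℝ≥0∞)⁻¹ ^ (n + 1) := by
      intro n
      have hεn : (ε : ℝ≥0∞) * (2 : ℝ≥0∞)⁻¹ ^ (n + 1) ≠ 0 := by
        refine mul_ne_zero (by exact_mod_cast hε.ne') (pow_ne_zero _ ?_)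
        simp
      have hlt2 : m (s n) < m (s n) + (ε : ℝ≥0∞) * (2 : ℝ≥0∞)⁻¹ ^ (n + 1) :=
        ENNReal.lt_add_right ((m_le_one _).trans_lt ENNReal.one_lt_top).ne hεn
      have h3 : (⨅ (G : Set H) (_ : IsOpen G) (_ : s n ⊆ G), β G)
          < m (s n) + (ε : ℝ≥0∞) * (2 : ℝ≥0∞)⁻¹ ^ (n + 1) := hlt2
      simp only [iInf_lt_iff] at h3
      obtain ⟨G, hG, hsub, hβ⟩ := h3
      exact ⟨G, hG, hsub, hβ.le⟩
    choose G hGopen hGsub hGβ using key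
    have tsum_eps : ∑' n : ℕ, (ε : ℝ≥0∞) * (2 : ℝ≥0∞)⁻¹ ^ (n + 1) = ε := by
      rw [ENNReal.tsum_mul_left]
      have h4 : ∑' n : ℕ, (2 : ℝ≥0∞)⁻¹ ^ (n + 1) = 1 := by
        simp_rw [pow_succ']
        rw [ENNReal.tsum_mul_left, ENNReal.tsum_geometric, ENNReal.one_sub_inv_two, inv_inv]
        exact ENNReal.inv_mul_cancel two_ne_zero ENNReal.ofNat_ne_top
      rw [h4, mul_one]
    calc m (⋃ n, s n) ≤ β (⋃ n, G n) := m_le (isOpen_iUnion hGopen) (iUnion_mono hGsub)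
      _ ≤ ∑' n, β (G n) := βsub G hGopen
      _ ≤ ∑' n, (m (s n) + (ε : ℝ≥0∞) * (2 : ℝ≥0∞)⁻¹ ^ (n + 1)) :=
          ENNReal.tsum_le_tsum fun n => hGβ n
      _ = ∑' n, m (s n) + ∑' n, (ε : ℝ≥0∞) * (2 : ℝ≥0∞)⁻¹ ^ (n + 1) := ENNReal.tsum_add
      _ ≤ ∑' n, m (s n) + ε := by rw [tsum_eps]
  set ν₀ : OuterMeasure H := ⟨m, m_empty, fun {s₁ s₂} h => m_mono h, fun s _ => m_subadd s⟩
    with hν₀def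
  have hν₀app : ∀ A, ν₀ A = m A := fun A => rfl
  have hmetric : ν₀.IsMetric := by
    intro s t hst
    refine le_antisymm (measure_union_le s t) ?_
    obtain ⟨r, hr0, hrs⟩ := hst
    have hr2 : (0 : ℝ≥0∞) < r / 2 := ENNReal.half_pos hr0
    rw [hν₀app, hν₀app, hν₀app]
    refine le_m fun G hG hsub => ?_
    set Gs := G ∩ {x | EMetric.infEdist x s < r / 2} with hGsdef
    set Gt := G ∩ {x | EMetric.infEdist x t < r / 2} with hGtdef
    have hGs_open : IsOpen Gs :=
      hG.inter (isOpen_Iio.preimage EMetric.continuous_infEdist)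
    have hGt_open : IsOpen Gt :=
      hG.inter (isOpen_Iio.preimage EMetric.continuous_infEdist)
    have hsGs : s ⊆ Gs := fun x hx =>
      ⟨hsub (Or.inl hx), by
        simp only [mem_setOf_eq, EMetric.infEdist_zero_of_mem hx]; exact lt_of_le_of_lt (le_of_eq (EMetric.infEdist_zero_of_mem hx)) hr2⟩
    have htGt : t ⊆ Gt := fun x hx =>
      ⟨hsub (Or.inr hx), by
        simp only [mem_setOf_eq, EMetric.infEdist_zero_of_mem hx]; exact lt_of_le_of_lt (le_of_eq (EMetric.infEdist_zero_of_mem hx)) hr2⟩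
    have hdisj : Disjoint Gs Gt := by
      rw [Set.disjoint_left]
      rintro x ⟨-, hxs⟩ ⟨-, hxt⟩
      obtain ⟨y, hy, hyd⟩ := EMetric.infEdist_lt_iff.mp hxs
      obtain ⟨z, hz, hzd⟩ := EMetric.infEdist_lt_iff.mp hxt
      have h5 : r ≤ edist y z := hrs y hy z hz
      have h6 : edist y z < r := by
        calc edist y z ≤ edist y x + edist x z := edist_triangle _ _ _
          _ = edist x y + edist x z := by rw [edist_comm]
          _ < r / 2 + r / 2 := ENNReal.add_lt_add hyd hzd
          _ = r := ENNReal.add_halves r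
      exact absurd (h5.trans_lt h6) (lt_irrefl r)
    have key : ∀ u, C u ⊆ Gs → ∀ v, C v ⊆ Gt → Λ u + Λ v ≤ β G := by
      intro u hu v hv
      have hdUV : Disjoint (U u) (U v) := hdisj.mono ((hUC u).trans hu) ((hUC v).trans hv)
      refine le_trans (le_of_eq (hΛadd u v hdUV).symm) (Λ_le_β ?_)
      rw [hCunion]
      exact union_subset (hu.trans inter_subset_left) (hv.trans inter_subset_left)
    refine (add_le_add (m_le hGs_open hsGs) (m_le hGt_open htGt)).trans ?_
    have e1 : β Gs = ⨆ p : {u // C u ⊆ Gs}, Λ ↑p := iSup_subtype'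
    have e2 : β Gt = ⨆ p : {u // C u ⊆ Gt}, Λ ↑p := iSup_subtype'
    have hCempty : C (∅ : Finset (ℕ × ℚ)) = ∅ := by simp [hCdef]
    haveI hne1 : Nonempty {u // C u ⊆ Gs} := ⟨⟨∅, by rw [hCempty]; exact empty_subset _⟩⟩
    haveI hne2 : Nonempty {u // C u ⊆ Gt} := ⟨⟨∅, by rw [hCempty]; exact empty_subset _⟩⟩
    rw [e1, e2, ENNReal.iSup_add]
    refine iSup_le fun p => ?_
    rw [ENNReal.add_iSup]
    exact iSup_le fun q => key ↑p p.2 ↑q q.2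
  have hcar : (inferInstance : MeasurableSpace H) ≤ ν₀.caratheodory := by
    rw [BorelSpace.measurable_eq (α := H)]
    exact hmetric.borel_le_caratheodory
  set ν : Measure H := ν₀.toMeasure hcar with hνdef
  have hν : ∀ {s : Set H}, MeasurableSet s → ν s = m s := fun {s} hs =>
    toMeasure_apply ν₀ hcar hs
  have hprob : IsProbabilityMeasure ν :=
    ⟨by rw [hν MeasurableSet.univ, m_open isOpen_univ, βuniv]⟩
  refine ⟨⟨ν, hprob⟩, φ, hφ, ?_⟩
  apply MeasureTheory.tendsto_of_forall_isOpen_le_liminf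
  intro G hG
  have hennreal : ν G ≤ liminf (fun j => (ρ (φ j) : Measure H) G) atTop := by
    rw [hν hG.measurableSet, m_open hG]
    refine iSup₂_le fun u hu => ?_
    rw [← (hΛ u).liminf_eq]
    exact liminf_le_liminf (.of_forall fun j => measure_mono ((hUC u).trans hu))
  have aux : (↑(liminf (fun j => ρ (φ j) G) atTop) : ℝ≥0∞)
      = liminf (fun j => ((ρ (φ j) G : ℝ≥0) : ℝ≥0∞)) atTop := by
    refine Monotone.map_liminf_of_continuousAt (F := atTop) ENNReal.coe_mono
      (fun j => ρ (φ j) G) ENNReal.continuous_coe.continuousAt ?_ ?_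
    · exact IsBoundedUnder.isCoboundedUnder_ge
        ⟨1, eventually_map.2 (.of_forall fun j => (ρ (φ j)).apply_le_one G)⟩
    · exact ⟨0, eventually_map.2 (.of_forall fun j => zero_le)⟩
  refine ENNReal.coe_le_coe.mp ?_
  change (((ν G).toNNReal : ℝ≥0) : ℝ≥0∞) ≤ _
  rw [ENNReal.coe_toNNReal (by haveI := hprob; exact measure_ne_top ν G), aux]
  simp only [ProbabilityMeasure.ennreal_coeFn_eq_coeFn_toMeasure]
  exact hennreal

/-- helper: convert an `ℝ≥0∞` liminf inequality for measures of a set into the `ℝ≥0`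
coefficient-function form. -/
lemma nnreal_le_liminf_aux {E' : Type*} [MeasurableSpace E'] {ν : ProbabilityMeasure E'}
    {αs : ℕ → ProbabilityMeasure E'} {G : Set E'}
    (h : (ν : Measure E') G ≤ liminf (fun j => (αs j : Measure E') G) atTop) :
    ν G ≤ liminf (fun j => αs j G) atTop := by
  have aux : (↑(liminf (fun j => αs j G) atTop) : ℝ≥0∞)
      = liminf (fun j => ((αs j G : ℝ≥0) : ℝ≥0∞)) atTop := by
    refine Monotone.map_liminf_of_continuousAt (F := atTop) ENNReal.coe_mono
      (fun j => αs j G) ENNReal.continuous_coe.continuousAt ?_ ?_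
    · exact IsBoundedUnder.isCoboundedUnder_ge
        ⟨1, eventually_map.2 (.of_forall fun j => (αs j).apply_le_one G)⟩
    · exact ⟨0, eventually_map.2 (.of_forall fun j => zero_le)⟩
  refine ENNReal.coe_le_coe.mp ?_
  rw [ProbabilityMeasure.ennreal_coeFn_eq_coeFn_toMeasure, aux]
  simp only [ProbabilityMeasure.ennreal_coeFn_eq_coeFn_toMeasure]
  exact h

instance : PolishSpace (Set.Icc (0:ℝ) 1) := isClosed_Icc.polishSpace

/-- A set of probability measures on a Polish space which is uniformly tight along a
vanishing sequence of tolerances is compact in the topology of weak convergence. -/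
theorem isCompact_tight_set {E : Type*} [TopologicalSpace E] [PolishSpace E]
    [MeasurableSpace E] [BorelSpace E]
    (K : ℕ → Set E) (hK : ∀ m, IsCompact (K m)) (δ : ℕ → ℝ≥0∞)
    (hδ : Tendsto δ atTop (𝓝 0)) :
    IsCompact {α : ProbabilityMeasure E | ∀ m, (α : Measure E) (K m)ᶜ ≤ δ m} := by
  classical
  by_cases hE : Nonempty E
  case neg =>
    haveI : IsEmpty (ProbabilityMeasure E) := ⟨fun α => hE α.nonempty⟩
    rw [Set.eq_empty_of_isEmpty {α : ProbabilityMeasure E | ∀ m, (α : Measure E) (K m)ᶜ ≤ δ m}]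
    exact isCompact_empty
  letI := TopologicalSpace.upgradeIsCompletelyMetrizable E
  set Hc := (ℕ → Set.Icc (0:ℝ) 1) with hHcdef
  letI : MeasurableSpace Hc := borel Hc
  haveI : BorelSpace Hc := ⟨rfl⟩
  letI := TopologicalSpace.upgradeIsCompletelyMetrizable Hc
  haveI : CompactSpace Hc := by infer_instance
  set D : ℕ → E := TopologicalSpace.denseSeq E with hDdef
  have hD : DenseRange D := TopologicalSpace.denseRange_denseSeq E
  -- the embedding into the cube
  set f : E → Hc := fun x n => ⟨min (dist x (D n)) 1,
    ⟨le_min dist_nonneg zero_le_one, min_le_right _ _⟩⟩ with hfdef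
  have hfc : Continuous f := by
    refine continuous_pi fun n => Continuous.subtype_mk ?_ _
    exact (continuous_id.dist continuous_const).min continuous_const
  have hfcoord : ∀ x n, ((f x n : ℝ)) = min (dist x (D n)) 1 := fun x n => rfl
  have hInd : IsInducing f := by
    rw [isInducing_iff_nhds]
    intro x
    refine le_antisymm ((hfc.tendsto x).le_comap) ?_
    intro s hs
    obtain ⟨ε, hε, hball⟩ := Metric.mem_nhds_iff.mp hs
    set ε' := min ε 1 with hε'def
    have hε' : (0:ℝ) < ε' := lt_min hε one_pos
    have hε'le : ε' ≤ 1 := min_le_right _ _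
    obtain ⟨n, hn⟩ := hD.exists_dist_lt x (by positivity : (0:ℝ) < ε'/3)
    refine mem_comap.mpr ⟨(fun y : Hc => (y n : ℝ)) ⁻¹' Iio (2*ε'/3), ?_, ?_⟩
    · refine IsOpen.mem_nhds (isOpen_Iio.preimage
        (continuous_subtype_val.comp (continuous_apply n))) ?_
      show (f x n : ℝ) < 2*ε'/3
      rw [hfcoord]
      calc min (dist x (D n)) 1 ≤ dist x (D n) := min_le_left _ _
        _ < ε'/3 := hn
        _ < 2*ε'/3 := by linarith
    · intro z hz
      simp only [mem_preimage, mem_Iio] at hz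
      rw [hfcoord] at hz
      have h2 : dist z (D n) < 2*ε'/3 := by
        rcases min_cases (dist z (D n)) 1 with ⟨he, -⟩ | ⟨he, hge⟩
        · rwa [he] at hz
        · rw [he] at hz; linarith
      apply hball
      have h3 : dist (D n) x < ε'/3 := by rwa [dist_comm]
      have h4 : dist z x < ε' := by
        calc dist z x ≤ dist z (D n) + dist (D n) x := dist_triangle _ _ _
          _ < 2*ε'/3 + ε'/3 := by linarith
          _ = ε' := by ring
      exact Metric.mem_ball.mpr (h4.trans_le (min_le_left _ _))
  have hfinj : Function.Injective f := by
    intro x y hxy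
    apply nhds_injective
    rw [isInducing_iff_nhds.mp hInd x, isInducing_iff_nhds.mp hInd y, hxy]
  have hfm : MeasurableEmbedding f := hfc.measurableEmbedding hfinj
  have hrm : MeasurableSet (range f) := by
    rw [← image_univ]; exact hfm.measurableSet_image.mpr MeasurableSet.univ
  have hKmeas : ∀ m, MeasurableSet (K m) := fun m => (hK m).isClosed.measurableSet
  -- the space of probability measures is metrizable
  letI : MetricSpace (ProbabilityMeasure E) :=
    TopologicalSpace.metrizableSpaceMetric (ProbabilityMeasure E)
  refine IsSeqCompact.isCompact ?_
  intro α hα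
  set ρ : ℕ → ProbabilityMeasure Hc := fun j => (α j).map hfc.measurable.aemeasurable with hρdef
  obtain ⟨σ, φ, hφ, hσ⟩ := prokhorov_core ρ
  have hρmeas : ∀ j, (ρ j : Measure Hc) = Measure.map f (α j) := fun j =>
    (α j).toMeasure_map hfc.measurable.aemeasurable
  have hfKclosed : ∀ m, IsClosed (f '' K m) := fun m => ((hK m).image hfc).isClosed
  have hαK : ∀ j m, (1:ℝ≥0∞) - δ m ≤ (α j : Measure E) (K m) := by
    intro j m
    by_cases hδm : δ m = ⊤
    · simp [hδm]
    have h1 : (α j : Measure E) (K m) + (α j : Measure E) (K m)ᶜ = 1 := by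
      rw [measure_add_measure_compl (hKmeas m), measure_univ]
    calc (1:ℝ≥0∞) - δ m
        = ((α j : Measure E) (K m) + (α j : Measure E) (K m)ᶜ) - δ m := by rw [h1]
      _ ≤ ((α j : Measure E) (K m) + δ m) - δ m :=
          tsub_le_tsub_right (add_le_add_right (hα j m) _) _
      _ = (α j : Measure E) (K m) := ENNReal.add_sub_cancel_right hδm
  have hmapK : ∀ j m, (ρ j : Measure Hc) (f '' K m) = (α j : Measure E) (K m) := by
    intro j m
    rw [hρmeas j, Measure.map_apply hfc.measurable (hfm.measurableSet_image.mpr (hKmeas m)),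
      Set.preimage_image_eq _ hfinj]
  have hσK : ∀ m, (1:ℝ≥0∞) - δ m ≤ (σ : Measure Hc) (f '' K m) := by
    intro m
    refine le_trans ?_ (ProbabilityMeasure.limsup_measure_closed_le_of_tendsto hσ (hfKclosed m))
    refine le_limsup_of_frequently_le (Frequently.of_forall fun j => ?_) ?_
    · rw [hmapK (φ j) m]; exact hαK (φ j) m
    · exact ⟨1, eventually_map.2 (.of_forall fun j => prob_le_one)⟩
  have hσrange : (σ : Measure Hc) (range f) = 1 := by
    refine le_antisymm prob_le_one ?_
    have h1 : ∀ m, (1:ℝ≥0∞) - δ m ≤ (σ : Measure Hc) (range f) := fun m =>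
      (hσK m).trans (measure_mono (image_subset_range f (K m)))
    have h2 : Tendsto (fun m => (1:ℝ≥0∞) - δ m) atTop (𝓝 1) := by
      have h3 := ENNReal.Tendsto.sub (tendsto_const_nhds (x := (1:ℝ≥0∞)) (f := atTop)) hδ
        (Or.inl ENNReal.one_ne_top)
      simpa using h3
    exact le_of_tendsto h2 (Eventually.of_forall h1)
  have hrangenull : (σ : Measure Hc) (range f)ᶜ = 0 := by
    rw [prob_compl_eq_one_sub hrm, hσrange, tsub_self]
  set νE : Measure E := Measure.comap f (σ : Measure Hc) with hνEdef
  have hcomap : ∀ s : Set E, νE s = (σ : Measure Hc) (f '' s) := fun s => hfm.comap_apply _ s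
  have hprob : IsProbabilityMeasure νE := ⟨by rw [hcomap, image_univ, hσrange]⟩
  refine ⟨⟨νE, hprob⟩, ?_, φ, hφ, ?_⟩
  · -- the limit is in the tight set
    intro m
    show ((⟨νE, hprob⟩ : ProbabilityMeasure E) : Measure E) (K m)ᶜ ≤ δ m
    have h2 : (1:ℝ≥0∞) - δ m ≤ νE (K m) := by rw [hcomap]; exact hσK m
    have h3 : (1:ℝ≥0∞) ≤ νE (K m) + δ m := tsub_le_iff_right.mp h2
    show νE (K m)ᶜ ≤ δ m
    rw [prob_compl_eq_one_sub (hKmeas m)]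
    exact tsub_le_iff_right.mpr (by rwa [add_comm] at h3)
  · -- weak convergence of the subsequence
    apply MeasureTheory.tendsto_of_forall_isOpen_le_liminf
    intro G hG
    obtain ⟨V, hVopen, hVG⟩ := hInd.isOpen_iff.mp hG
    refine nnreal_le_liminf_aux ?_
    show νE G ≤ liminf (fun j => (α (φ j) : Measure E) G) atTop
    rw [hcomap]
    have h1 : f '' G = V ∩ range f := by rw [← hVG, image_preimage_eq_inter_range]
    have h2 : (σ : Measure Hc) (f '' G) = (σ : Measure Hc) V := by
      rw [h1]
      refine le_antisymm (measure_mono inter_subset_left) ?_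
      calc (σ : Measure Hc) V ≤ (σ : Measure Hc) (V ∩ range f ∪ (range f)ᶜ) := by
            refine measure_mono fun y hy => ?_
            by_cases h : y ∈ range f
            · exact Or.inl ⟨hy, h⟩
            · exact Or.inr h
        _ ≤ (σ : Measure Hc) (V ∩ range f) + (σ : Measure Hc) (range f)ᶜ :=
            measure_union_le _ _
        _ = (σ : Measure Hc) (V ∩ range f) := by rw [hrangenull, add_zero]
    rw [h2]
    refine (ProbabilityMeasure.le_liminf_measure_open_of_tendsto hσ hVopen).trans (le_of_eq ?_)
    have h4 : ∀ j, (ρ (φ j) : Measure Hc) V = (α (φ j) : Measure E) G := by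
      intro j
      rw [hρmeas, Measure.map_apply hfc.measurable hVopen.measurableSet, hVG]
    simp only [h4]

/-- The σ-algebra on `P(E)` induced from the Giry σ-algebra on measures. -/
noncomputable instance probabilityMeasureMeasurableSpace {E : Type*} [MeasurableSpace E] :
    MeasurableSpace (ProbabilityMeasure E) :=
  MeasurableSpace.comap (fun μ => (μ : Measure E)) inferInstance

/-- For an infinite exchangeable sequence `(X_i)` of `E`-valued random variables on a
probability space `(Ω, P)` with `E` Polish, the laws of the empirical measures
`Z_n = (1/(n+1)) Σ_{i≤n} δ_{X_i}` form a tight family of probability measures on the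
space `P(E)` of probability measures with the topology of weak convergence. -/
theorem stmt_8 {E : Type*} [TopologicalSpace E] [PolishSpace E]
    [MeasurableSpace E] [BorelSpace E]
    {Ω : Type*} [MeasurableSpace Ω] (P : Measure Ω) [IsProbabilityMeasure P]
    (X : ℕ → Ω → E) (hX : ∀ i, Measurable (X i))
    (hexch : ∀ (n : ℕ) (σ : Equiv.Perm (Fin n)),
      Measure.map (fun ω (i : Fin n) => X (σ i) ω) P
        = Measure.map (fun ω (i : Fin n) => X i ω) P)
    (Z : ℕ → Ω → ProbabilityMeasure E)
    (hZ : ∀ n ω, (Z n ω : Measure E)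
        = ((n + 1 : ℕ) : ℝ≥0∞)⁻¹ • ∑ i : Fin (n + 1), Measure.dirac (X i ω)) :
    ∀ ε : ℝ≥0∞, 0 < ε → ∃ K : Set (ProbabilityMeasure E), IsCompact K ∧
      ∀ n, 1 - ε ≤ Measure.map (Z n) P K := by
  intro ε hε
  classical
  haveI hPne : Nonempty Ω := by
    by_contra h
    rw [not_nonempty_iff] at h
    have h1 : (1 : ℝ≥0∞) = 0 := by
      rw [← measure_univ (μ := P), Set.univ_eq_empty_iff.mpr h, measure_empty]
    exact one_ne_zero h1
  haveI hEne : Nonempty E := (Z 0 hPne.some).nonempty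
  set μ₀ : Measure E := Measure.map (X 0) P with hμ₀def
  haveI : IsProbabilityMeasure μ₀ := Measure.isProbabilityMeasure_map (hX 0).aemeasurable
  -- all the `X i` have the same law
  have hident : ∀ i : ℕ, Measure.map (X i) P = μ₀ := by
    intro i
    rcases Nat.eq_zero_or_pos i with rfl | hi
    · rfl
    have hlt : i < i + 1 := Nat.lt_succ_self i
    have h0 : (0 : ℕ) < i + 1 := Nat.succ_pos i
    set σp : Equiv.Perm (Fin (i + 1)) := Equiv.swap ⟨0, h0⟩ ⟨i, hlt⟩ with hσpdef
    have h := hexch (i + 1) σp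
    have hmble : Measurable (fun ω (j : Fin (i + 1)) => X j ω) :=
      measurable_pi_lambda _ fun j => hX _
    have hmble2 : Measurable (fun ω (j : Fin (i + 1)) => X (σp j) ω) :=
      measurable_pi_lambda _ fun j => hX _
    have h2 := congrArg (Measure.map (fun g : Fin (i + 1) → E => g ⟨0, h0⟩)) h
    rw [Measure.map_map (measurable_pi_apply _) hmble2,
      Measure.map_map (measurable_pi_apply _) hmble] at h2
    have hσ0 : σp ⟨0, h0⟩ = ⟨i, hlt⟩ := Equiv.swap_apply_left _ _
    simp only [Function.comp_def, hσ0] at h2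
    exact h2
  -- tolerances
  set ε' : ℝ≥0∞ := min ε 1 with hε'def
  have hε'0 : ε' ≠ 0 := (lt_min hε zero_lt_one).ne'
  have hε'le : ε' ≤ ε := min_le_left _ _
  set δ : ℕ → ℝ≥0∞ := fun m => (2 : ℝ≥0∞)⁻¹ ^ m with hδdef
  have hδ0 : ∀ m, δ m ≠ 0 := fun m => pow_ne_zero _ (by simp)
  have hδtop : ∀ m, δ m ≠ ⊤ := fun m => ENNReal.pow_ne_top (by simp)
  have hδtend : Tendsto δ atTop (𝓝 0) :=
    ENNReal.tendsto_pow_atTop_nhds_zero_of_lt_one (by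
      rw [ENNReal.inv_lt_one]; exact ENNReal.one_lt_two)
  set cm : ℕ → ℝ≥0∞ := fun m => ε' * 2⁻¹ * (2 : ℝ≥0∞)⁻¹ ^ (m + 1) * δ m with hcmdef
  have hcm0 : ∀ m, cm m ≠ 0 := fun m =>
    mul_ne_zero (mul_ne_zero (mul_ne_zero hε'0 (by simp)) (pow_ne_zero _ (by simp))) (hδ0 m)
  -- tight compacts for μ₀
  have hc : ∀ m : ℕ, ∃ Km : Set E, IsCompact Km ∧ μ₀ Kmᶜ ≤ cm m := by
    letI := TopologicalSpace.upgradeIsCompletelyMetrizable E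
    intro m
    exact exists_isCompact_compl_le μ₀ (hcm0 m)
  choose Kc hKccomp hKcle using hc
  set S := {α : ProbabilityMeasure E | ∀ m, (α : Measure E) (Kc m)ᶜ ≤ δ m} with hSdef
  refine ⟨S, isCompact_tight_set Kc hKccomp δ hδtend, ?_⟩
  intro n
  -- pointwise formula for `Z n` applied to a measurable set
  have happ : ∀ (s : Set E), MeasurableSet s → ∀ ω, (Z n ω : Measure E) s
      = ((n + 1 : ℕ) : ℝ≥0∞)⁻¹ * ∑ i : Fin (n + 1), s.indicator (1 : E → ℝ≥0∞) (X i ω) := by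
    intro s hs ω
    rw [hZ n ω, Measure.smul_apply, Measure.finset_sum_apply, smul_eq_mul]
    simp only [Measure.dirac_apply' _ hs]
  -- measurability of `Z n`
  have hZcoe : Measurable (fun ω => (Z n ω : Measure E)) := by
    apply Measure.measurable_of_measurable_coe
    intro s hs
    simp only [happ s hs]
    refine Measurable.const_mul (Finset.measurable_sum _ fun i _ => ?_) _
    exact (measurable_one.indicator hs).comp (hX i)
  have hZm : Measurable (Z n) := by
    intro s hs
    obtain ⟨t, ht, rfl⟩ := hs
    exact hZcoe ht
  have hKcm : ∀ m, MeasurableSet (Kc m)ᶜ := fun m =>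
    (hKccomp m).isClosed.measurableSet.compl
  -- S is measurable
  have hSmeas : MeasurableSet S := by
    have hrw : S = ⋂ m, (fun α : ProbabilityMeasure E => (α : Measure E)) ⁻¹'
        ((fun μ : Measure E => μ (Kc m)ᶜ) ⁻¹' (Iic (δ m))) := by
      ext α
      simp [hSdef, Set.mem_iInter]
    rw [hrw]
    refine MeasurableSet.iInter fun m => ?_
    exact MeasurableSpace.measurableSet_comap.mpr
      ⟨_, (Measure.measurable_coe (hKcm m)) measurableSet_Iic, rfl⟩
  rw [Measure.map_apply hZm hSmeas]
  -- Markov bound on each bad event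
  have hbad : ∀ m, P {ω | δ m < (Z n ω : Measure E) (Kc m)ᶜ}
      ≤ ε' * 2⁻¹ * (2 : ℝ≥0∞)⁻¹ ^ (m + 1) := by
    intro m
    set g : Ω → ℝ≥0∞ := fun ω => (Z n ω : Measure E) (Kc m)ᶜ with hgdef
    have hgm : Measurable g := (Measure.measurable_coe (hKcm m)).comp hZcoe
    have hlint : ∫⁻ ω, g ω ∂P = μ₀ (Kc m)ᶜ := by
      simp only [hgdef, happ _ (hKcm m)]
      rw [lintegral_const_mul' _ _ (ENNReal.inv_ne_top.mpr (by exact_mod_cast Nat.succ_ne_zero n))]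
      have hmi : ∀ i : Fin (n + 1),
          Measurable fun ω => ((Kc m)ᶜ).indicator (1 : E → ℝ≥0∞) (X i ω) :=
        fun i => (measurable_one.indicator (hKcm m)).comp (hX i)
      rw [lintegral_finset_sum _ fun i _ => hmi i]
      have hone : ∀ i : Fin (n + 1),
          ∫⁻ ω, ((Kc m)ᶜ).indicator (1 : E → ℝ≥0∞) (X i ω) ∂P = μ₀ (Kc m)ᶜ := by
        intro i
        have hcomp : (fun ω => ((Kc m)ᶜ).indicator (1 : E → ℝ≥0∞) (X i ω))
            = (X i ⁻¹' (Kc m)ᶜ).indicator (1 : Ω → ℝ≥0∞) := by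
          funext ω
          by_cases h : X i ω ∈ Kc m <;>
            simp [Set.indicator_apply, Set.mem_preimage, h]
        rw [hcomp, lintegral_indicator_one (hX i (hKcm m)),
          ← Measure.map_apply (hX i) (hKcm m), hident i]
      simp only [hone, Finset.sum_const, Finset.card_univ, Fintype.card_fin, nsmul_eq_mul]
      rw [← mul_assoc, ENNReal.inv_mul_cancel (by exact_mod_cast Nat.succ_ne_zero n)
        (ENNReal.natCast_ne_top _), one_mul]
    calc P {ω | δ m < g ω} ≤ P {ω | δ m ≤ g ω} :=
          measure_mono fun ω (h : δ m < g ω) => h.le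
      _ ≤ (∫⁻ ω, g ω ∂P) / δ m := meas_ge_le_lintegral_div hgm.aemeasurable (hδ0 m) (hδtop m)
      _ = μ₀ (Kc m)ᶜ / δ m := by rw [hlint]
      _ ≤ cm m / δ m := ENNReal.div_le_div_right (hKcle m) _
      _ = ε' * 2⁻¹ * (2 : ℝ≥0∞)⁻¹ ^ (m + 1) := by
          rw [hcmdef]
          rw [mul_div_assoc, ENNReal.div_self (hδ0 m) (hδtop m), mul_one]
  -- total bad probability
  have hbadsub : (Z n ⁻¹' S)ᶜ ⊆ ⋃ m, {ω | δ m < (Z n ω : Measure E) (Kc m)ᶜ} := by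
    intro ω hω
    simp only [Set.mem_compl_iff, Set.mem_preimage, hSdef, Set.mem_setOf_eq, not_forall,
      not_le] at hω
    obtain ⟨m, hm⟩ := hω
    exact Set.mem_iUnion.mpr ⟨m, hm⟩
  have hbadtotal : P ((Z n ⁻¹' S)ᶜ) ≤ ε' := by
    calc P ((Z n ⁻¹' S)ᶜ) ≤ P (⋃ m, {ω | δ m < (Z n ω : Measure E) (Kc m)ᶜ}) :=
          measure_mono hbadsub
      _ ≤ ∑' m, P {ω | δ m < (Z n ω : Measure E) (Kc m)ᶜ} := measure_iUnion_le _
      _ ≤ ∑' m, ε' * 2⁻¹ * (2 : ℝ≥0∞)⁻¹ ^ (m + 1) := ENNReal.tsum_le_tsum hbad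
      _ = ε' * 2⁻¹ := by rw [ENNReal.tsum_mul_left, tsum_half_pow_succ, mul_one]
      _ ≤ ε' * 1 := mul_le_mul_right (by simp [ENNReal.inv_le_one]) _
      _ = ε' := mul_one _
  have hgood : P (Z n ⁻¹' S) = 1 - P ((Z n ⁻¹' S)ᶜ) := by
    have h1 := prob_compl_eq_one_sub (μ := P) (hZm hSmeas).compl
    rwa [compl_compl] at h1
  rw [hgood]
  exact tsub_le_tsub_left (hbadtotal.trans hε'le) 1
end

section
/- Let X = Y = [0,1] with Borel σ-algebras, and let μ₀ be the pushforward of Lebesgue measure on [0,1] under r ↦ (r,r), i.e. the uniform measure on the diagonal Δ of [0,1]². Define h : FMeas([0,1]²) → ℝ≥0 by h(ν) = ν₀([0,1]²), where ν = ν₀ + ν₁ is the Lebesgue decomposition of ν with ν₀ ≪ μ₀ and ν₁ ⊥ μ₀. Then h is additive, positively homogeneous, and monotone, h is not identically zero, but h(a × b) = 0 for every pair of finite Borel measures a, b on [0,1]. -/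
open MeasureTheory
open scoped ENNReal NNReal unitInterval

/-- The uniform measure on the diagonal of `[0,1]²`: the pushforward of Lebesgue measure
on `[0,1]` under `r ↦ (r,r)`. -/
noncomputable def diagMeasure : Measure (I × I) :=
  Measure.map (fun r : I => (r, r)) (Measure.comap Subtype.val volume)

/-- The functional `h(ν) = ν₀([0,1]²)` where `ν = ν₀ + ν₁` is the Lebesgue decomposition
of `ν` with `ν₀ ≪ μ₀` and `ν₁ ⊥ μ₀` (so `ν₀ = μ₀.withDensity (ν.rnDeriv μ₀)`). -/
noncomputable def hFun (ν : Measure (I × I)) : ℝ≥0∞ :=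
  (diagMeasure.withDensity (ν.rnDeriv diagMeasure)) Set.univ

lemma me_val : MeasurableEmbedding (Subtype.val : I → ℝ) :=
  MeasurableEmbedding.subtype_coe measurableSet_Icc

lemma measurable_diagI : Measurable (fun r : I => (r, r)) :=
  measurable_id.prodMk measurable_id

instance : IsFiniteMeasure (Measure.comap (Subtype.val : I → ℝ) volume) := by
  constructor
  rw [me_val.comap_apply]
  simp only [Set.image_univ, Subtype.range_coe]
  rw [show (unitInterval : Set ℝ) = Set.Icc 0 1 from rfl, Real.volume_Icc]
  norm_num

instance : IsFiniteMeasure diagMeasure := by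
  unfold diagMeasure
  infer_instance

instance (ν : Measure (I × I)) [IsFiniteMeasure ν] : ν.HaveLebesgueDecomposition diagMeasure :=
  Measure.haveLebesgueDecomposition_of_sigmaFinite ν diagMeasure

lemma diagMeasure_univ : diagMeasure Set.univ = 1 := by
  unfold diagMeasure
  rw [Measure.map_apply measurable_diagI MeasurableSet.univ, Set.preimage_univ,
    me_val.comap_apply, Set.image_univ, Subtype.range_coe,
    show (unitInterval : Set ℝ) = Set.Icc 0 1 from rfl, Real.volume_Icc]
  norm_num

lemma hFun_eq (ν : Measure (I × I)) :
    hFun ν = ∫⁻ x, ν.rnDeriv diagMeasure x ∂diagMeasure := by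
  rw [hFun, withDensity_apply _ MeasurableSet.univ, Measure.restrict_univ]

lemma hFun_add (ν ν' : Measure (I × I)) [IsFiniteMeasure ν] [IsFiniteMeasure ν'] :
    hFun (ν + ν') = hFun ν + hFun ν' := by
  rw [hFun_eq, hFun_eq, hFun_eq,
    lintegral_congr_ae (Measure.rnDeriv_add ν ν' diagMeasure)]
  exact lintegral_add_left (Measure.measurable_rnDeriv _ _) _

/-- The product measure of two finite measures is singular w.r.t. the diagonal measure. -/
lemma prod_mutuallySingular (a b : Measure I) [IsFiniteMeasure a] [IsFiniteMeasure b] :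
    (a.prod b) ⟂ₘ diagMeasure := by
  classical
  -- the common atoms
  set C : Set I := {r | 0 < a {r}} ∩ {r | 0 < b {r}} with hC
  have hCcount : C.Countable := by
    refine Set.Countable.mono Set.inter_subset_left ?_
    exact Measure.countable_meas_pos_of_disjoint_iUnion
      (fun r : I => MeasurableSet.singleton r)
      (fun r s hrs => by simpa [Set.disjoint_singleton] using hrs)
  -- the diagonal of the common atoms
  set D : Set (I × I) := (fun r : I => (r, r)) '' C with hD
  have hDcount : D.Countable := hCcount.image _
  have hDmeas : MeasurableSet D := hDcount.measurableSet
  have hΔ : MeasurableSet (Set.diagonal I) := (isClosed_diagonal).measurableSet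
  refine ⟨Set.diagonal I \ D, hΔ.diff hDmeas, ?_, ?_⟩
  · -- the product measure vanishes on the diagonal minus the common atoms
    rw [Measure.prod_apply (hΔ.diff hDmeas)]
    rw [← lintegral_zero (μ := a)]
    apply lintegral_congr_ae
    -- the set of b-atoms that are not a-atoms is a-null
    have hN : a ({r | 0 < b {r}} \ {r | 0 < a {r}}) = 0 := by
      have hcount : ({r | 0 < b {r}} \ {r | 0 < a {r}} : Set I).Countable := by
        refine Set.Countable.mono Set.diff_subset ?_
        exact Measure.countable_meas_pos_of_disjoint_iUnion
          (fun r : I => MeasurableSet.singleton r)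
          (fun r s hrs => by simpa [Set.disjoint_singleton] using hrs)
      have hrew : ({r | 0 < b {r}} \ {r | 0 < a {r}} : Set I)
          = ⋃ r ∈ ({r | 0 < b {r}} \ {r | 0 < a {r}} : Set I), ({r} : Set I) :=
        (Set.biUnion_of_singleton _).symm
      rw [hrew]
      refine (measure_biUnion_null_iff hcount).mpr ?_
      intro r hr
      simpa using hr.2
    rw [Filter.eventuallyEq_iff_exists_mem]
    refine ⟨({r | 0 < b {r}} \ {r | 0 < a {r}})ᶜ, ?_, ?_⟩
    · rw [mem_ae_iff, compl_compl]; exact hN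
    · intro x hx
      simp only [Set.mem_compl_iff, Set.mem_diff, Set.mem_setOf_eq, not_and, not_lt,
        nonpos_iff_eq_zero] at hx
      -- the slice of `diagonal \ D` at `x` is contained in `{x}` and empty when `x ∈ C`
      have hslice : Prod.mk x ⁻¹' (Set.diagonal I \ D) ⊆ {x} \ (if x ∈ C then {x} else ∅) := by
        intro y hy
        obtain ⟨hy1, hy2⟩ := hy
        have hyx : y = x := hy1.symm
        subst hyx
        refine ⟨rfl, ?_⟩
        intro hmem
        split_ifs at hmem with h
        · exact hy2 ⟨y, h, rfl⟩
        · exact hmem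
      by_cases hxC : x ∈ C
      · have : Prod.mk x ⁻¹' (Set.diagonal I \ D) = ∅ := by
          apply Set.eq_empty_of_subset_empty
          refine hslice.trans ?_
          simp [hxC]
        simp [this]
      · -- then either a {x} = 0 (irrelevant) or b {x} = 0
        have hb : b {x} = 0 := by
          by_contra hbx
          have hbx' : 0 < b {x} := pos_iff_ne_zero.mpr hbx
          exact hxC ⟨pos_iff_ne_zero.mpr (hx hbx'), hbx'⟩
        have : b (Prod.mk x ⁻¹' (Set.diagonal I \ D)) ≤ b {x} :=
          measure_mono (hslice.trans Set.diff_subset)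
        simpa [hb] using le_antisymm (this.trans_eq hb) (zero_le)
  · -- the diagonal measure vanishes off (diagonal \ D)
    rw [Set.diff_eq, Set.compl_inter, compl_compl]
    refine measure_union_null ?_ ?_
    · unfold diagMeasure
      rw [Measure.map_apply measurable_diagI hΔ.compl,
        show (fun r : I => (r, r)) ⁻¹' (Set.diagonal I)ᶜ = (∅ : Set I) from by
          ext r; simp [Set.diagonal]]
      exact measure_empty
    · unfold diagMeasure
      rw [Measure.map_apply measurable_diagI hDmeas]
      have hpre : (fun r : I => (r, r)) ⁻¹' D ⊆ C := by
        intro r hr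
        obtain ⟨s, hs, hrs⟩ := hr
        obtain ⟨h1, _⟩ := Prod.mk.injEq .. ▸ hrs
        exact h1 ▸ hs
      refine measure_mono_null hpre ?_
      rw [me_val.comap_apply]
      exact Set.Countable.measure_zero (hCcount.image _) _

/-- The functional `h` on finite Borel measures on `[0,1]²` given by the total mass of the
part absolutely continuous w.r.t. the uniform measure on the diagonal is additive,
positively homogeneous and monotone; it is not identically zero; yet it vanishes on all
product measures `a × b` of finite Borel measures on `[0,1]`. -/
theorem stmt_9 :
    (∀ ν ν' : Measure (I × I), IsFiniteMeasure ν → IsFiniteMeasure ν' →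
        hFun (ν + ν') = hFun ν + hFun ν') ∧
    (∀ (c : ℝ≥0) (ν : Measure (I × I)), IsFiniteMeasure ν →
        hFun (c • ν) = c * hFun ν) ∧
    (∀ ν ν' : Measure (I × I), IsFiniteMeasure ν → IsFiniteMeasure ν' →
        ν ≤ ν' → hFun ν ≤ hFun ν') ∧
    (∃ ν : Measure (I × I), IsFiniteMeasure ν ∧ hFun ν ≠ 0) ∧
    (∀ a b : Measure I, IsFiniteMeasure a → IsFiniteMeasure b →
        hFun (a.prod b) = 0) := by
  refine ⟨?_, ?_, ?_, ?_, ?_⟩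
  · intro ν ν' hν hν'
    exact hFun_add ν ν'
  · intro c ν hν
    rw [hFun_eq, hFun_eq,
      lintegral_congr_ae (Measure.rnDeriv_smul_left ν diagMeasure c)]
    simp only [Pi.smul_apply, ENNReal.smul_def, smul_eq_mul]
    exact lintegral_const_mul _ (Measure.measurable_rnDeriv _ _)
  · intro ν ν' hν hν' hle
    haveI : IsFiniteMeasure (ν' - ν) :=
      isFiniteMeasure_of_le ν' (Measure.sub_le)
    have h := hFun_add (ν' - ν) ν
    rw [Measure.sub_add_cancel_of_le hle] at h
    rw [h]
    exact le_add_self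
  · refine ⟨diagMeasure, inferInstance, ?_⟩
    rw [hFun, Measure.withDensity_rnDeriv_eq _ _ Measure.AbsolutelyContinuous.rfl,
      diagMeasure_univ]
    exact one_ne_zero
  · intro a b ha hb
    haveI := ha; haveI := hb
    rw [hFun,
      withDensity_congr_ae ((Measure.rnDeriv_eq_zero _ _).mpr (prod_mutuallySingular a b))]
    simp
end

section
/- Let X be a countable discrete measurable space. In the category PCoh of probabilistic coherence spaces, the canonical copointed-object morphism α = ⟨id, w⟩ : X^PCoh → X^PCoh & 1 (pairing the identity with the total-weight map w) induces, for each n, a morphism M_n α between the equalisers of symmetries, given by the matrix (M_n α)_{μ,ν} = multinomial(μ − ν) if ν ⊆ μ (as multisets) and 0 otherwise, where μ ranges over size-n multisets on X and ν over multisets of size ≤ n on X; and these morphisms form a chain morphism from the De Finetti draw-and-delete chain to the approximations chain. -/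
open scoped ENNReal Classical

noncomputable section

/-- A `PCoh`-style matrix from a web `I` to a web `J`. -/
def Mat (I J : Type*) := I → J → ℝ≥0∞

/-- Matrix composition (first `f`, then `g`). -/
def mcomp {I J K : Type*} (f : Mat I J) (g : Mat J K) : Mat I K :=
  fun i k => ∑' j : J, f i j * g j k

/-- Multisets of size at most `n` over `X`: the web of `M_n (X^PCoh & 1)`. -/
def MleSet (X : Type*) (n : ℕ) := {m : Multiset X // Multiset.card m ≤ n}

/-- The multinomial coefficient of a finite multiset: the number of its enumerations. -/
def multinom {X : Type*} (m : Multiset X) : ℕ :=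
  (Multiset.card m).factorial / m.toFinset.prod fun a => (m.count a).factorial

/-- The quotient map sending a tuple to its multiset. -/
def tupMset {X : Type*} {n : ℕ} (a : Fin n → X) : Multiset X := (List.ofFn a : Multiset X)

/-- The equaliser matrix `eq_n : M_n X^PCoh → (X^PCoh)^{⊗n}`,
`(eq_n)_{μ,(a₁,…,a_n)} = δ_{μ,[a₁,…,a_n]}`. -/
def eqMat (X : Type*) (n : ℕ) : Mat (Sym X n) (Fin n → X) :=
  fun μ a => if tupMset a = (μ : Multiset X) then 1 else 0

/-- The equaliser matrix for `(X^PCoh & 1)^{⊗n}`, under the identification of size-`n`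
multisets over `X ⊔ {⋆}` with multisets of size `≤ n` over `X` (padding with `⋆`, i.e.
with `none`). -/
def eqMat' (X : Type*) (n : ℕ) : Mat (MleSet X n) (Fin n → Option X) :=
  fun ν b => if tupMset b
    = ν.1.map some + Multiset.replicate (n - Multiset.card ν.1) none then 1 else 0

/-- The matrix of the copointed morphism `α = ⟨id, w⟩ : X^PCoh → X^PCoh & 1`. -/
def alphaMat (X : Type*) : Mat X (Option X) :=
  fun x y => if y = some x ∨ y = none then 1 else 0

/-- The `n`-fold tensor power `α^{⊗n}`. -/
def alphaPow (X : Type*) (n : ℕ) : Mat (Fin n → X) (Fin n → Option X) :=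
  fun a b => ∏ i : Fin n, alphaMat X (a i) (b i)

/-- The matrix `(M_n α)_{μ,ν} = multinomial(μ-ν)` if `ν ⊆ μ`, and `0` otherwise. -/
def MalphaMat (X : Type*) (n : ℕ) : Mat (Sym X n) (MleSet X n) :=
  fun μ ν => if ν.1 ≤ (μ : Multiset X) then (multinom ((μ : Multiset X) - ν.1) : ℝ≥0∞) else 0

/-- The De Finetti draw-and-delete matrix `M_{n+1} X → M_n X` (in the concrete
presentation of the equalisers of symmetries in `PCoh` by the δ-matrices `eq_n`), the
unique matrix with `eq_n ∘ DD_n = (X^{⊗n} ⊗ w) ∘ eq_{n+1}`. -/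
def DDDF (X : Type*) (n : ℕ) : Mat (Sym X (n + 1)) (Sym X n) :=
  fun μ ν => if (ν : Multiset X) ≤ (μ : Multiset X) then 1 else 0

/-- The draw-and-delete matrix of the approximations chain, `(DD_n)_{μ,ν} = δ_{μ,ν}`. -/
def DDBang (X : Type*) (n : ℕ) : Mat (MleSet X (n + 1)) (MleSet X n) :=
  fun μ ν => if μ.1 = ν.1 then 1 else 0


/-! ### Auxiliary lemmas -/

section Aux

variable {X : Type*}

lemma multinom_spec (m : Multiset X) :
    (m.toFinset.prod fun a => (m.count a).factorial) * multinom m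
      = (Multiset.card m).factorial := by
  classical
  have h := Nat.multinomial_spec m.toFinset m.count
  unfold multinom Nat.multinomial at *
  rw [Multiset.toFinset_sum_count_eq] at h
  exact h

lemma multinom_zero : multinom (0 : Multiset X) = 1 := by
  simp [multinom]

lemma multinom_rec (ρ : Multiset X) (h : ρ ≠ 0) :
    ∑ x ∈ ρ.toFinset, multinom (ρ.erase x) = multinom ρ := by
  classical
  set D := ρ.toFinset.prod fun a => (ρ.count a).factorial with hD
  have hDpos : 0 < D := Finset.prod_pos fun a _ => Nat.factorial_pos _
  apply Nat.eq_of_mul_eq_mul_left hDpos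
  rw [Finset.mul_sum]
  have hterm : ∀ x ∈ ρ.toFinset,
      D * multinom (ρ.erase x) = ρ.count x * (Multiset.card ρ - 1).factorial := by
    intro x hx
    have hxρ : x ∈ ρ := Multiset.mem_toFinset.1 hx
    have hc : 1 ≤ ρ.count x := Multiset.one_le_count_iff_mem.2 hxρ
    have hce : ∀ a, (ρ.erase x).count a = if a = x then ρ.count x - 1 else ρ.count a := by
      intro a
      by_cases hax : a = x
      · subst hax; simp [Multiset.count_erase_self]
      · simp [Multiset.count_erase_of_ne hax, hax]
    have hprod : D = (ρ.toFinset.prod fun a => ((ρ.erase x).count a).factorial) * ρ.count x := by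
      rw [hD, ← Finset.prod_erase_mul _ _ hx, ← Finset.prod_erase_mul _ _ hx]
      have h1 : ∀ a ∈ ρ.toFinset.erase x,
          (ρ.count a).factorial = ((ρ.erase x).count a).factorial := by
        intro a ha
        rw [hce a, if_neg (Finset.mem_erase.1 ha).1]
      rw [Finset.prod_congr rfl h1, hce x, if_pos rfl, mul_assoc]
      congr 1
      rw [← Nat.succ_pred_eq_of_pos hc, Nat.factorial_succ]
      simp [Nat.succ_pred_eq_of_pos hc, mul_comm]
    have hsub : (ρ.erase x).toFinset ⊆ ρ.toFinset := by
      intro a ha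
      exact Multiset.mem_toFinset.2 (Multiset.mem_of_mem_erase (Multiset.mem_toFinset.1 ha))
    have hprod2 : (ρ.toFinset.prod fun a => ((ρ.erase x).count a).factorial)
        = (ρ.erase x).toFinset.prod fun a => ((ρ.erase x).count a).factorial := by
      refine (Finset.prod_subset hsub ?_).symm
      intro a _ ha
      have : (ρ.erase x).count a = 0 := by
        rw [Multiset.count_eq_zero]
        exact fun hmem => ha (Multiset.mem_toFinset.2 hmem)
      simp [this]
    have hcard : Multiset.card (ρ.erase x) = Multiset.card ρ - 1 := by
      rw [Multiset.card_erase_of_mem hxρ]; rfl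
    calc D * multinom (ρ.erase x)
        = ρ.count x * ((((ρ.erase x).toFinset.prod
            fun a => ((ρ.erase x).count a).factorial)) * multinom (ρ.erase x)) := by
          rw [hprod, hprod2]; ring
      _ = ρ.count x * (Multiset.card ρ - 1).factorial := by rw [multinom_spec, hcard]
  rw [Finset.sum_congr rfl hterm, ← Finset.sum_mul, Multiset.toFinset_sum_count_eq]
  rw [multinom_spec]
  have hcpos : 0 < Multiset.card ρ := Multiset.card_pos.2 h
  rw [← Nat.succ_pred_eq_of_pos hcpos, Nat.factorial_succ]
  simp [Nat.succ_pred_eq_of_pos hcpos]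

lemma tupMset_cons {n : ℕ} (x : X) (a : Fin n → X) :
    tupMset (Fin.cons x a) = x ::ₘ tupMset a := by
  simp [tupMset, List.ofFn_succ]

@[simp] lemma card_tupMset {n : ℕ} (a : Fin n → X) :
    Multiset.card (tupMset a) = n := by simp [tupMset]

lemma tupMset_eq_cons {n : ℕ} (b : Fin (n+1) → X) :
    tupMset b = b 0 ::ₘ tupMset (fun i => b i.succ) := by
  simp [tupMset, List.ofFn_succ]

lemma count_erase' (a x : X) (μ : Multiset X) :
    (μ.erase x).count a = μ.count a - (if a = x then 1 else 0) := by
  by_cases h : a = x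
  · subst h; simp [Multiset.count_erase_self]
  · simp [Multiset.count_erase_of_ne h, h]

lemma cons_le_iff' (y : X) (ν μ : Multiset X) :
    y ::ₘ ν ≤ μ ↔ y ∈ μ ∧ ν ≤ μ.erase y := by
  constructor
  · intro h
    refine ⟨Multiset.mem_of_le h (Multiset.mem_cons_self y ν), ?_⟩
    have := Multiset.erase_le_erase y h
    simpa using this
  · rintro ⟨hy, hν⟩
    calc y ::ₘ ν ≤ y ::ₘ μ.erase y := Multiset.cons_le_cons y hν
    _ = μ := Multiset.cons_erase hy

lemma sub_cons' (y : X) (ν μ : Multiset X) :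
    μ - (y ::ₘ ν) = μ.erase y - ν := by
  ext a
  simp only [Multiset.count_sub, Multiset.count_cons, count_erase']
  split_ifs with h <;> omega

lemma le_erase_iff {ν μ : Multiset X} (hν : ν ≤ μ) (x : X) (hx : x ∈ μ) :
    ν ≤ μ.erase x ↔ x ∈ μ - ν := by
  rw [Multiset.le_iff_count, ← Multiset.count_pos, Multiset.count_sub]
  constructor
  · intro h
    have := h x
    rw [Multiset.count_erase_self] at this
    have hxc : 0 < μ.count x := Multiset.count_pos.2 hx
    omega
  · intro h a
    have h2 := Multiset.le_iff_count.1 hν a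
    rw [count_erase']
    split_ifs with hax
    · subst hax; omega
    · omega

lemma erase_sub_eq {ν μ : Multiset X} (hν : ν ≤ μ) {x : X} (hx : x ∈ μ - ν) :
    μ.erase x - ν = (μ - ν).erase x := by
  ext a
  have h2 := Multiset.le_iff_count.1 hν a
  have h3 := Multiset.le_iff_count.1 hν x
  have hxc : 0 < (μ - ν).count x := Multiset.count_pos.2 hx
  rw [Multiset.count_sub] at hxc
  simp only [Multiset.count_sub, count_erase']
  split_ifs with h <;> omega

lemma erase_inj_of_mem {μ : Multiset X} {x x' : X} (hx : x ∈ μ) (hx' : x' ∈ μ)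
    (h : μ.erase x = μ.erase x') : x = x' := by
  by_contra hne
  have h1 : (μ.erase x).count x = μ.count x - 1 := Multiset.count_erase_self x μ
  have h2 : (μ.erase x').count x = μ.count x := Multiset.count_erase_of_ne hne μ
  have hc : 1 ≤ μ.count x := Multiset.one_le_count_iff_mem.2 hx
  rw [h, h2] at h1
  omega

/-- The multiset of `some`-values of a multiset over `Option X`. -/
def somes (m : Multiset (Option X)) : Multiset X := m.filterMap id

@[simp] lemma somes_zero : somes (0 : Multiset (Option X)) = 0 := rfl

@[simp] lemma somes_cons_some (x : X) (m : Multiset (Option X)) :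
    somes (some x ::ₘ m) = x ::ₘ somes m := by
  simp [somes, Multiset.filterMap_cons_some]

@[simp] lemma somes_cons_none (m : Multiset (Option X)) :
    somes (none ::ₘ m) = somes m := by
  simp [somes]

lemma somes_decomp (m : Multiset (Option X)) :
    m = (somes m).map some + Multiset.replicate (m.count none) none := by
  induction m using Multiset.induction_on with
  | empty => simp
  | cons a m ih =>
    cases a with
    | none =>
      rw [somes_cons_none, Multiset.count_cons_self, Multiset.replicate_succ]
      conv_lhs => rw [ih]
      rw [Multiset.add_cons]
    | some x =>
      rw [somes_cons_some, Multiset.count_cons_of_ne (by simp), Multiset.map_cons,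
        Multiset.cons_add]
      conv_lhs => rw [ih]

lemma card_somes (m : Multiset (Option X)) :
    Multiset.card (somes m) + m.count none = Multiset.card m := by
  induction m using Multiset.induction_on with
  | empty => simp
  | cons a m ih =>
    cases a with
    | none => simp [Multiset.count_cons_self]; omega
    | some x =>
      rw [somes_cons_some, Multiset.count_cons_of_ne (show (none:Option X) ≠ some x by simp)]
      simp; omega

lemma somes_pad (ν : Multiset X) (k : ℕ) :
    somes (ν.map some + Multiset.replicate k none) = ν := by
  induction ν using Multiset.induction_on with
  | empty =>
    simp only [Multiset.map_zero, zero_add]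
    induction k with
    | zero => simp
    | succ k ih => rw [Multiset.replicate_succ, somes_cons_none, ih]
  | cons a m ih => rw [Multiset.map_cons, Multiset.cons_add, somes_cons_some, ih]

lemma exists_tup {Y : Type*} : ∀ (n : ℕ) (m : Multiset Y), Multiset.card m = n →
    ∃ b : Fin n → Y, tupMset b = m := by
  intro n
  induction n with
  | zero =>
    intro m hm
    refine ⟨Fin.elim0, ?_⟩
    rw [Multiset.card_eq_zero] at hm
    simp [tupMset, hm]
  | succ n ih =>
    intro m hm
    obtain ⟨x, hx⟩ : ∃ x, x ∈ m := Multiset.exists_mem_of_ne_zero (by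
      intro h; rw [h] at hm; simp at hm)
    obtain ⟨b', hb'⟩ := ih (m.erase x) (by rw [Multiset.card_erase_of_mem hx, hm]; rfl)
    exact ⟨Fin.cons x b', by rw [tupMset_cons, hb', Multiset.cons_erase hx]⟩

lemma key : ∀ (n : ℕ) (μ : Multiset X) (b : Fin n → Option X),
    Multiset.card μ = n →
    (∑' a : Fin n → X, (if tupMset a = μ then (1:ℝ≥0∞) else 0) * alphaPow X n a b)
    = if somes (tupMset b) ≤ μ then (multinom (μ - somes (tupMset b)) : ℝ≥0∞) else 0 := by
  intro n
  induction n with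
  | zero =>
    intro μ b hμ
    rw [Multiset.card_eq_zero] at hμ
    subst hμ
    have h0 : ∀ a : Fin 0 → X, tupMset a = 0 := by intro a; simp [tupMset]
    have hb : tupMset b = 0 := by
      have := card_tupMset (X := Option X) b
      rwa [Multiset.card_eq_zero] at this
    rw [tsum_eq_single (fun i => i.elim0) ?_]
    · simp [h0, alphaPow, hb, somes, multinom_zero]
    · intro a ha
      exact absurd (Subsingleton.elim a _) ha
  | succ n ih =>
    intro μ b hμ
    rw [← Equiv.tsum_eq (Fin.consEquiv (fun _ => X))]
    rw [ENNReal.tsum_prod']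
    have hsplit : ∀ (x : X) (a : Fin n → X),
        ((if tupMset ((Fin.consEquiv fun _ => X) (x, a)) = μ then (1:ℝ≥0∞) else 0)
          * alphaPow X (n+1) ((Fin.consEquiv fun _ => X) (x, a)) b)
        = alphaMat X x (b 0) *
          ((if x ::ₘ tupMset a = μ then (1:ℝ≥0∞) else 0)
            * alphaPow X n a (fun i => b i.succ)) := by
      intro x a
      have he : (Fin.consEquiv fun _ => X) (x, a) = Fin.cons x a := rfl
      rw [he, tupMset_cons]
      have hp : alphaPow X (n+1) (Fin.cons x a) b
          = alphaMat X x (b 0) * alphaPow X n a (fun i => b i.succ) := by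
        unfold alphaPow
        rw [Fin.prod_univ_succ]
        simp
      rw [hp]; ring
    simp only [hsplit]
    set ν' := somes (tupMset (fun i => b i.succ)) with hν'
    have hν'card : Multiset.card ν' ≤ n := by
      rw [hν']
      have := card_somes (tupMset (fun i => b i.succ))
      rw [card_tupMset] at this; omega
    have hinner : ∀ x : X,
        (∑' a : Fin n → X, (if x ::ₘ tupMset a = μ then (1:ℝ≥0∞) else 0)
          * alphaPow X n a (fun i => b i.succ))
        = if x ∈ μ then
            (if ν' ≤ μ.erase x then (multinom (μ.erase x - ν') : ℝ≥0∞) else 0) else 0 := by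
      intro x
      by_cases hx : x ∈ μ
      · rw [if_pos hx, ← ih (μ.erase x) (fun i => b i.succ)
          (by rw [Multiset.card_erase_of_mem hx, hμ]; rfl)]
        congr 1
        funext a
        congr 2
        have : x ::ₘ tupMset a = μ ↔ tupMset a = μ.erase x := by
          constructor
          · intro h; rw [← h, Multiset.erase_cons_head]
          · intro h; rw [h, Multiset.cons_erase hx]
        simp only [eq_iff_iff]
        exact this
      · rw [if_neg hx]
        convert tsum_zero with a
        rw [if_neg, zero_mul]
        intro h
        exact hx (h ▸ Multiset.mem_cons_self x (tupMset a))
    simp only [ENNReal.tsum_mul_left]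
    simp only [hinner]
    rw [tupMset_eq_cons b]
    cases hb0 : b 0 with
    | some y =>
      rw [somes_cons_some]
      rw [tsum_eq_single y ?_]
      · have : alphaMat X y (some y) = 1 := by simp [alphaMat]
        rw [this, one_mul, ← hν']
        simp only [cons_le_iff', sub_cons']
        by_cases h1 : y ∈ μ
        · by_cases h2 : ν' ≤ μ.erase y
          · rw [if_pos h1, if_pos h2, if_pos ⟨h1, h2⟩]
          · rw [if_pos h1, if_neg h2, if_neg (by tauto)]
        · rw [if_neg h1, if_neg (by tauto)]
      · intro x hx
        have : alphaMat X x (some y) = 0 := by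
          simp only [alphaMat]
          rw [if_neg]
          push_neg
          exact ⟨fun h => hx (Option.some_injective X h.symm ▸ rfl), by simp⟩
        rw [this, zero_mul]
    | none =>
      rw [somes_cons_none]
      have hα : ∀ x : X, alphaMat X x none = 1 := by intro x; simp [alphaMat]
      simp only [hα, one_mul]
      rw [tsum_eq_sum (s := μ.toFinset) (by intro x hx; rw [if_neg (by simpa using hx)])]
      by_cases hle : ν' ≤ μ
      · rw [if_pos hle]
        have hterm : ∀ x ∈ μ.toFinset,
            (if x ∈ μ then
              (if ν' ≤ μ.erase x then (multinom (μ.erase x - ν') : ℝ≥0∞) else 0) else 0)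
            = if x ∈ (μ - ν').toFinset then (multinom ((μ - ν').erase x) : ℝ≥0∞) else 0 := by
          intro x hx
          have hxμ : x ∈ μ := Multiset.mem_toFinset.1 hx
          rw [if_pos hxμ]
          by_cases h2 : x ∈ μ - ν'
          · rw [if_pos (Multiset.mem_toFinset.2 h2), if_pos ((le_erase_iff hle x hxμ).2 h2),
              erase_sub_eq hle h2]
          · rw [if_neg (fun hc => h2 (Multiset.mem_toFinset.1 hc)),
              if_neg (fun hc => h2 ((le_erase_iff hle x hxμ).1 hc))]
        rw [Finset.sum_congr rfl hterm, Finset.sum_ite_mem,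
          Finset.inter_eq_right.2 ?_]
        · have hne : μ - ν' ≠ 0 := by
            intro hc
            have h1 : Multiset.card (μ - ν') = Multiset.card μ - Multiset.card ν' :=
              Multiset.card_sub hle
            rw [hc] at h1
            simp at h1
            omega
          rw [← Nat.cast_sum, multinom_rec _ hne]
        · intro x hx
          exact Multiset.mem_toFinset.2
            (Multiset.mem_of_le (Multiset.sub_le_self _ _) (Multiset.mem_toFinset.1 hx))
      · rw [if_neg hle]
        apply Finset.sum_eq_zero
        intro x hx
        rw [if_pos (Multiset.mem_toFinset.1 hx), if_neg]
        intro hc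
        exact hle (le_trans hc (Multiset.erase_le x μ))

lemma eqMat'_eq (n : ℕ) (ν : MleSet X n) (b : Fin n → Option X) :
    eqMat' X n ν b = if ν.1 = somes (tupMset b) then 1 else 0 := by
  unfold eqMat'
  congr 1
  simp only [eq_iff_iff]
  constructor
  · intro h
    rw [h, somes_pad]
  · intro h
    have hd := somes_decomp (tupMset b)
    have hc := card_somes (tupMset b)
    rw [card_tupMset] at hc
    rw [h]
    conv_lhs => rw [hd]
    congr 2
    omega

/-- Collapse lemma: composing with `eqMat'` evaluates at the unique matching column. -/
lemma mcomp_eqMat' (n : ℕ) (m : Mat (Sym X n) (MleSet X n)) (μ : Sym X n)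
    (ν : MleSet X n) (b : Fin n → Option X) (hb : somes (tupMset b) = ν.1) :
    mcomp m (eqMat' X n) μ b = m μ ν := by
  unfold mcomp
  rw [tsum_eq_single ν ?_]
  · rw [eqMat'_eq, if_pos hb.symm, mul_one]
  · intro ν' hν'
    rw [eqMat'_eq, if_neg, mul_zero]
    intro hc
    exact hν' (Subtype.ext (hc.trans hb))

end Aux

/-- For a countable discrete space `X`, the copointed morphism `α = ⟨id,w⟩` induces on
the equalisers of symmetries the morphisms `M_n α` with matrix
`(M_n α)_{μ,ν} = multinomial(μ-ν)` for `ν ⊆ μ` (and `0` otherwise): these are the unique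
matrices satisfying `eq'_n ∘ M_n α = α^{⊗n} ∘ eq_n`, and they form a chain morphism from
the De Finetti draw-and-delete chain to the approximations chain. -/
theorem stmt_12 (X : Type*) [Countable X] (n : ℕ) :
    (mcomp (MalphaMat X n) (eqMat' X n) = mcomp (eqMat X n) (alphaPow X n)) ∧
    (∀ m : Mat (Sym X n) (MleSet X n),
      mcomp m (eqMat' X n) = mcomp (eqMat X n) (alphaPow X n) → m = MalphaMat X n) ∧
    (mcomp (DDDF X n) (MalphaMat X n) = mcomp (MalphaMat X (n + 1)) (DDBang X n)) := by
  refine ⟨?_, ?_, ?_⟩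
  · -- Part 1
    funext μ b
    have hb : Multiset.card (somes (tupMset b)) ≤ n := by
      have := card_somes (tupMset b)
      rw [card_tupMset] at this; omega
    rw [mcomp_eqMat' n _ μ ⟨somes (tupMset b), hb⟩ b rfl]
    show MalphaMat X n μ _ = mcomp (eqMat X n) (alphaPow X n) μ b
    unfold mcomp eqMat MalphaMat
    rw [key n (μ : Multiset X) b μ.2]
  · -- Part 2 (uniqueness)
    intro m h
    funext μ ν
    have hcard : Multiset.card (ν.1.map some
        + Multiset.replicate (n - Multiset.card ν.1) none) = n := by
      rw [Multiset.card_add, Multiset.card_map, Multiset.card_replicate]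
      have := ν.2
      omega
    obtain ⟨b, hb⟩ := exists_tup n _ hcard
    have hs : somes (tupMset b) = ν.1 := by rw [hb, somes_pad]
    have h1 := congrFun (congrFun h μ) b
    rw [mcomp_eqMat' n m μ ν b hs] at h1
    have h2 : mcomp (MalphaMat X n) (eqMat' X n) μ b
        = mcomp (eqMat X n) (alphaPow X n) μ b := by
      rw [mcomp_eqMat' n _ μ ν b hs]
      show MalphaMat X n μ ν = mcomp (eqMat X n) (alphaPow X n) μ b
      unfold mcomp eqMat MalphaMat
      rw [key n (μ : Multiset X) b μ.2, hs]
    rw [mcomp_eqMat' n _ μ ν b hs] at h2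
    rw [h1, ← h2]
  · -- Part 3 (chain morphism)
    funext μ ν
    -- RHS collapses
    obtain ⟨ν₀, hν₀⟩ : ∃ ν₀ : MleSet X (n+1), ν₀.1 = ν.1 :=
      ⟨⟨ν.1, le_trans ν.2 (Nat.le_succ n)⟩, rfl⟩
    have hRHS : mcomp (MalphaMat X (n+1)) (DDBang X n) μ ν
        = MalphaMat X (n+1) μ ν₀ := by
      unfold mcomp
      rw [tsum_eq_single ν₀ ?_]
      · unfold DDBang
        rw [if_pos hν₀, mul_one]
      · intro ν' hν'
        unfold DDBang
        rw [if_neg, mul_zero]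
        intro hc
        exact hν' (Subtype.ext (hc.trans hν₀.symm))
    rw [hRHS]
    show mcomp (DDDF X n) (MalphaMat X n) μ ν
      = if ν₀.1 ≤ (μ : Multiset X) then (multinom ((μ : Multiset X) - ν₀.1) : ℝ≥0∞) else 0
    rw [hν₀]
    unfold mcomp DDDF MalphaMat
    by_cases hle : ν.1 ≤ (μ : Multiset X)
    · rw [if_pos hle]
      have hsub : ∀ x ∈ ((μ : Multiset X) - ν.1).toFinset, x ∈ (μ : Multiset X) :=
        fun x hx => Multiset.mem_of_le (Multiset.sub_le_self _ _) (Multiset.mem_toFinset.1 hx)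
      have hpf : ∀ x : {x // x ∈ ((μ : Multiset X) - ν.1).toFinset},
          Multiset.card ((μ : Multiset X).erase x.1) = n := fun x => by
        rw [Multiset.card_erase_of_mem (hsub x.1 x.2),
          show Multiset.card (μ : Multiset X) = n + 1 from μ.2]
        rfl
      set G : Finset (Sym X n) :=
        ((μ : Multiset X) - ν.1).toFinset.attach.image
          (fun x => (⟨(μ : Multiset X).erase x.1, hpf x⟩ : Sym X n)) with hG
      rw [tsum_eq_sum (s := G) ?_]
      · rw [hG]; erw [Finset.sum_image ?_]
        · have hterm : ∀ x ∈ ((μ : Multiset X) - ν.1).toFinset.attach,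
              ((if ((⟨(μ : Multiset X).erase x.1, hpf x⟩ : Sym X n) : Multiset X) ≤ (μ : Multiset X)
                  then (1:ℝ≥0∞) else 0) *
                (if ν.1 ≤ ((⟨(μ : Multiset X).erase x.1, hpf x⟩ : Sym X n) : Multiset X)
                  then (multinom (((⟨(μ : Multiset X).erase x.1, hpf x⟩ : Sym X n) : Multiset X) - ν.1) : ℝ≥0∞) else 0))
              = (multinom (((μ : Multiset X) - ν.1).erase x.1) : ℝ≥0∞) := by
            intro x hx
            have hx2 : x.1 ∈ (μ : Multiset X) - ν.1 := Multiset.mem_toFinset.1 x.2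
            have hxμ : x.1 ∈ (μ : Multiset X) := hsub x.1 x.2
            have hl1 : (μ : Multiset X).erase x.1 ≤ (μ : Multiset X) := Multiset.erase_le _ _
            have hl2 : ν.1 ≤ (μ : Multiset X).erase x.1 := (le_erase_iff hle x.1 hxμ).2 hx2
            show ((if (μ : Multiset X).erase x.1 ≤ (μ : Multiset X) then (1:ℝ≥0∞) else 0) * _) = _
            rw [if_pos hl1, one_mul, if_pos hl2, erase_sub_eq hle hx2]
          refine (Finset.sum_congr rfl hterm).trans ?_
          rw [Finset.sum_attach _
            (fun x => (multinom (((μ : Multiset X) - ν.1).erase x) : ℝ≥0∞))]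
          have hne : (μ : Multiset X) - ν.1 ≠ 0 := by
            intro hc
            have h1 : Multiset.card ((μ : Multiset X) - ν.1)
                = Multiset.card (μ : Multiset X) - Multiset.card ν.1 := Multiset.card_sub hle
            have e1 : Multiset.card (μ : Multiset X) = n + 1 := μ.2
            rw [hc, e1] at h1
            have := ν.2
            simp at h1
            omega
          rw [← Nat.cast_sum, multinom_rec _ hne]
        · intro x _ x' _ hxx'
          have : (μ : Multiset X).erase x.1 = (μ : Multiset X).erase x'.1 :=
            congrArg Sym.toMultiset hxx'
          exact Subtype.ext (erase_inj_of_mem (hsub x.1 x.2) (hsub x'.1 x'.2) this)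
      · -- terms outside G vanish
        intro σ hσ
        by_cases h1 : (σ : Multiset X) ≤ (μ : Multiset X)
        · by_cases h2 : ν.1 ≤ (σ : Multiset X)
          · exfalso
            apply hσ
            -- σ = μ.erase x for some x ∈ μ - ν
            have hc1 : Multiset.card ((μ : Multiset X) - (σ : Multiset X)) = 1 := by
              have e1 : Multiset.card (μ : Multiset X) = n + 1 := μ.2
              have e2 : Multiset.card (σ : Multiset X) = n := σ.2
              rw [Multiset.card_sub h1, e1, e2]
              omega
            obtain ⟨x, hx⟩ := Multiset.card_eq_one.1 hc1
            have hμσ : (μ : Multiset X) = x ::ₘ (σ : Multiset X) := by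
              have := tsub_add_cancel_of_le h1
              rw [hx] at this
              rw [← this, Multiset.singleton_add]
            have hxμ : x ∈ (μ : Multiset X) := by rw [hμσ]; exact Multiset.mem_cons_self _ _
            have hσe : (σ : Multiset X) = (μ : Multiset X).erase x := by
              rw [hμσ, Multiset.erase_cons_head]
            have hxmem : x ∈ (μ : Multiset X) - ν.1 :=
              (le_erase_iff hle x hxμ).1 (hσe ▸ h2)
            rw [hG]
            apply Finset.mem_image.2
            refine ⟨⟨x, Multiset.mem_toFinset.2 hxmem⟩, Finset.mem_attach _ _, ?_⟩
            exact Subtype.ext hσe.symm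
          · rw [if_neg h2, mul_zero]
        · rw [if_neg h1, zero_mul]
    · rw [if_neg hle]
      convert tsum_zero with σ
      by_cases h1 : (σ : Multiset X) ≤ (μ : Multiset X)
      · rw [if_neg (show ¬ ν.1 ≤ (σ : Multiset X) from fun hc => hle (le_trans hc h1)),
          mul_zero]
      · rw [if_neg h1, zero_mul]


end
end

section
/- Let X be a countable set. For any PCS A with web X, the free exponential !A has web the finite multisets over X and P(!A) = {x^! : x ∈ P(A)}^{⊥⊥}, where x^!_{[a₁,…,a_n]} = Π_i x_{a_i}. Then for any element u ∈ P(!A) that is total (u ∈ {z^! : z ∈ T(A)}^{⊫⊫} where T(A) is the set of total elements of A with Σ_x z_x = 1 and ⊫ is the strict orthogonality ⟨u,v⟩ = 1), and for every finite multiset μ over X: u_μ = Σ_{x∈X} u_{μ+[x]}. -/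
open scoped ENNReal

noncomputable section

/-- The pairing `⟨u,v⟩ = Σ_a u_a v_a` of two nonnegative vectors over a web `I`. -/
def pairing {I : Type*} (u v : I → ℝ≥0∞) : ℝ≥0∞ := ∑' a : I, u a * v a

/-- The (lax) dual of a set of vectors: `S^⊥ = {v : ∀ u ∈ S, ⟨u,v⟩ ≤ 1}`. -/
def laxDual {I : Type*} (S : Set (I → ℝ≥0∞)) : Set (I → ℝ≥0∞) :=
  {v | ∀ u ∈ S, pairing u v ≤ 1}

/-- Strict dual of `U ⊆ P` (for a PCS with element set `P`):
`U^⊫ = {v ∈ P^⊥ : ∀ u ∈ U, ⟨u,v⟩ = 1}`. -/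
def strictDual {I : Type*} (P U : Set (I → ℝ≥0∞)) : Set (I → ℝ≥0∞) :=
  {v | v ∈ laxDual P ∧ ∀ u ∈ U, pairing u v = 1}

/-- Strict bidual, landing back among the elements:
`V^⊫ = {u ∈ P : ∀ v ∈ V, ⟨u,v⟩ = 1}`. -/
def strictDualBack {I : Type*} (P V : Set (I → ℝ≥0∞)) : Set (I → ℝ≥0∞) :=
  {u | u ∈ P ∧ ∀ v ∈ V, pairing u v = 1}

/-- Promotion `x^!` of a vector `x : X → ℝ≥0∞`, defined on finite multisets by
`x^!_μ = Π_{a ∈ μ} x_a` (with multiplicity). -/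
def promotion {X : Type*} (x : X → ℝ≥0∞) (μ : Multiset X) : ℝ≥0∞ := (μ.map x).prod

/-- Elements of the PCS `A = X^PCoh`: the subprobability vectors on `X`. -/
def subProb (X : Type*) : Set (X → ℝ≥0∞) := {x | ∑' a : X, x a ≤ 1}

/-- Total elements of `X^PCoh`: the probability vectors on `X`. -/
def totalVec (X : Type*) : Set (X → ℝ≥0∞) := {x | ∑' a : X, x a = 1}

/-- Elements of the free exponential `!A`: the bidual closure of the promotions of
elements of `A`. -/
def bangElems (X : Type*) : Set (Multiset X → ℝ≥0∞) :=
  laxDual (laxDual {u | ∃ x ∈ subProb X, u = promotion x})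

/-- Total elements of `!A`: the strict bidual `{z^! : z ∈ T(A)}^{⊫⊫}` of the promotions
of total elements of `A`. -/
def bangTotal (X : Type*) : Set (Multiset X → ℝ≥0∞) :=
  strictDualBack (bangElems X)
    (strictDual (bangElems X) {u | ∃ x ∈ totalVec X, u = promotion x})

/- ## Auxiliary lemmas -/

lemma pairing_comm' {I : Type*} (u v : I → ℝ≥0∞) : pairing u v = pairing v u :=
  tsum_congr fun _ => mul_comm _ _

lemma pairing_add_right' {I : Type*} (u v w : I → ℝ≥0∞) :
    pairing u (fun a => v a + w a) = pairing u v + pairing u w := by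
  unfold pairing
  rw [← ENNReal.tsum_add]
  exact tsum_congr fun a => mul_add _ _ _

lemma pairing_smul_right' {I : Type*} (c : ℝ≥0∞) (u v : I → ℝ≥0∞) :
    pairing u (fun a => c * v a) = c * pairing u v := by
  unfold pairing
  rw [← ENNReal.tsum_mul_left]
  exact tsum_congr fun a => by ring

lemma pairing_single' {I : Type*} (u : I → ℝ≥0∞) (b : I)
    [DecidablePred fun a => a = b] :
    pairing u (fun a => if a = b then 1 else 0) = u b := by
  unfold pairing
  rw [tsum_eq_single b (fun a ha => by simp [ha])]
  simp

lemma pairing_indicator_tsum' {I J : Type*} (u : I → ℝ≥0∞) (g : J → I)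
    [∀ j ν, Decidable (g j = ν)] :
    pairing u (fun ν => ∑' j : J, if g j = ν then 1 else 0) = ∑' j : J, u (g j) := by
  unfold pairing
  calc ∑' ν, u ν * ∑' j : J, (if g j = ν then (1:ℝ≥0∞) else 0)
      = ∑' ν, ∑' j : J, (if g j = ν then u ν else 0) := by
        refine tsum_congr fun ν => ?_
        rw [← ENNReal.tsum_mul_left]
        exact tsum_congr fun j => by split <;> simp
    _ = ∑' j : J, ∑' ν, (if g j = ν then u ν else 0) := ENNReal.tsum_comm
    _ = ∑' j : J, u (g j) := by
        refine tsum_congr fun j => ?_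
        rw [tsum_eq_single (g j) (fun ν hν => by simp [Ne.symm hν])]
        simp

lemma tsum_pi_fin' {X : Type*} (x : X → ℝ≥0∞) (n : ℕ) :
    ∑' f : Fin n → X, ∏ i, x (f i) = (∑' a, x a) ^ n := by
  induction n with
  | zero =>
      haveI : Unique (Fin 0 → X) := ⟨⟨fun i => i.elim0⟩, fun f => funext fun i => i.elim0⟩
      rw [pow_zero, tsum_eq_single (default : Fin 0 → X)
        (fun f hf => absurd (Subsingleton.elim f default) hf)]
      simp
  | succ n ih =>
      rw [pow_succ, ← ih]
      rw [← (Fin.consEquiv (fun _ : Fin (n+1) => X)).tsum_eq (fun f => ∏ i, x (f i))]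
      have h1 : ∀ p : X × (Fin n → X),
          (∏ i, x ((Fin.consEquiv (fun _ : Fin (n+1) => X) p) i)) = x p.1 * ∏ i, x (p.2 i) := by
        intro p
        rw [Fin.prod_univ_succ]
        simp [Fin.consEquiv]
      rw [tsum_congr h1,
        ENNReal.tsum_prod (f := fun (a : X) (g : Fin n → X) => x a * ∏ i, x (g i))]
      calc ∑' (a : X) (g : Fin n → X), x a * ∏ i, x (g i)
          = ∑' a : X, x a * ∑' g : Fin n → X, ∏ i, x (g i) :=
            tsum_congr fun a => ENNReal.tsum_mul_left
        _ = (∑' g : Fin n → X, ∏ i, x (g i)) * ∑' a, x a := by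
            rw [ENNReal.tsum_mul_right, mul_comm]

lemma subset_laxDual_laxDual' {I : Type*} (S : Set (I → ℝ≥0∞)) :
    S ⊆ laxDual (laxDual S) := fun u hu v hv => pairing_comm' v u ▸ hv u hu

lemma laxDual_antitone' {I : Type*} {S T : Set (I → ℝ≥0∞)} (h : S ⊆ T) :
    laxDual T ⊆ laxDual S := fun v hv u hu => hv u (h hu)

lemma laxDual_triple' {I : Type*} (S : Set (I → ℝ≥0∞)) :
    laxDual (laxDual (laxDual S)) = laxDual S :=
  le_antisymm (laxDual_antitone' (subset_laxDual_laxDual' S))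
    (subset_laxDual_laxDual' (laxDual S))

lemma promotion_add' {X : Type*} (x : X → ℝ≥0∞) (μ ν : Multiset X) :
    promotion x (μ + ν) = promotion x μ * promotion x ν := by
  simp [promotion]

lemma promotion_singleton' {X : Type*} (x : X → ℝ≥0∞) (a : X) :
    promotion x ({a} : Multiset X) = x a := by simp [promotion]

lemma promotion_ofFn' {X : Type*} (x : X → ℝ≥0∞) {n : ℕ} (f : Fin n → X) :
    promotion x ((List.ofFn f : List X) : Multiset X) = ∏ i, x (f i) := by
  simp [promotion, ← List.prod_ofFn, List.map_ofFn]
  rfl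

lemma exists_listing' {X : Type*} (μ : Multiset X) :
    ∃ f : Fin (Multiset.card μ) → X, ((List.ofFn f : List X) : Multiset X) = μ := by
  have hlen : μ.toList.length = Multiset.card μ := Multiset.length_toList μ
  refine ⟨fun i => μ.toList.get (Fin.cast hlen.symm i), ?_⟩
  have h : List.ofFn (fun i => μ.toList.get (Fin.cast hlen.symm i)) = μ.toList := by
    apply List.ext_getElem
    · simp [hlen]
    · intro i h1 h2
      simp [List.getElem_ofFn]
  rw [h, Multiset.coe_toList]

lemma fiber_finite' {X : Type*} (μ : Multiset X) (n : ℕ) :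
    {f : Fin n → X | ((List.ofFn f : List X) : Multiset X) = μ}.Finite := by
  classical
  apply Set.Finite.subset (Set.Finite.pi (t := fun _ : Fin n => (↑μ.toFinset : Set X))
    (fun _ => μ.toFinset.finite_toSet))
  intro f hf i _
  have h1 : f i ∈ (List.ofFn f : List X) := by
    rw [List.mem_ofFn]; exact ⟨i, rfl⟩
  have h2 : f i ∈ μ := by rw [← hf]; exact h1
  simpa using h2

/-- Every total element `u` of the free exponential `!X^PCoh` over a countable set `X`
satisfies the recursion `u_μ = Σ_{x∈X} u_{μ+[x]}` for every finite multiset `μ` over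
`X`. -/
theorem stmt_13 {X : Type*} [Countable X] (u : Multiset X → ℝ≥0∞)
    (hu : u ∈ bangTotal X) (μ : Multiset X) :
    u μ = ∑' x : X, u (μ + {x}) := by
  classical
  obtain ⟨huE, huT⟩ := hu
  set n := Multiset.card μ with hn
  set T : (Fin n → X) → Multiset X := fun f => ((List.ofFn f : List X) : Multiset X)
    with hT
  set cnt : Multiset X → ℝ≥0∞ := fun ν => ∑' f : Fin n → X, if T f = ν then 1 else 0
    with hcnt
  set A : ℝ≥0∞ := cnt μ with hA
  set w : Multiset X → ℝ≥0∞ := fun ν => if ν = μ then 0 else cnt ν with hw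
  set v' : Multiset X → ℝ≥0∞ :=
    fun ν => w ν + A * ∑' a : X, if μ + {a} = ν then 1 else 0 with hv'
  -- decomposition of `cnt`
  have hcnt_eq : cnt = fun ν => w ν + A * (if ν = μ then 1 else 0) := by
    funext ν
    by_cases h : ν = μ <;> simp [hw, hA, h]
  -- pairing identities
  have hp_cnt : ∀ u' : Multiset X → ℝ≥0∞, pairing u' cnt = pairing u' w + A * u' μ := by
    intro u'
    rw [hcnt_eq]
    exact (pairing_add_right' u' w _).trans
      (by rw [pairing_smul_right', pairing_single'])
  have hp_v' : ∀ u' : Multiset X → ℝ≥0∞,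
      pairing u' v' = pairing u' w + A * ∑' a : X, u' (μ + {a}) := by
    intro u'
    rw [hv']
    exact (pairing_add_right' u' w _).trans
      (by rw [pairing_smul_right', pairing_indicator_tsum' u' (fun a : X => μ + {a})])
  have hp_cnt_prom : ∀ x : X → ℝ≥0∞, pairing (promotion x) cnt = (∑' a, x a) ^ n := by
    intro x
    rw [hcnt]
    rw [pairing_indicator_tsum' (promotion x) T]
    rw [tsum_congr (fun f => promotion_ofFn' x f)]
    exact tsum_pi_fin' x n
  -- the lax dual of `bangElems` is the dual of the promotions
  have hldual : laxDual (bangElems X) = laxDual {u' | ∃ x ∈ subProb X, u' = promotion x} :=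
    laxDual_triple' _
  -- `cnt` is in the strict dual
  have hv_mem : cnt ∈ strictDual (bangElems X) {u' | ∃ x ∈ totalVec X, u' = promotion x} := by
    constructor
    · rw [hldual]
      rintro u' ⟨x, hx, rfl⟩
      rw [hp_cnt_prom x]
      exact pow_le_one₀ zero_le hx
    · rintro u' ⟨x, hx, rfl⟩
      rw [hp_cnt_prom x, hx, one_pow]
  -- `v'` is in the strict dual
  have hsum_prom : ∀ x : X → ℝ≥0∞,
      (∑' a : X, promotion x (μ + {a})) = promotion x μ * ∑' a, x a := by
    intro x
    rw [tsum_congr (fun a => by rw [promotion_add', promotion_singleton'])]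
    exact ENNReal.tsum_mul_left
  have hv'_mem : v' ∈ strictDual (bangElems X) {u' | ∃ x ∈ totalVec X, u' = promotion x} := by
    constructor
    · rw [hldual]
      rintro u' ⟨x, hx, rfl⟩
      rw [hp_v' (promotion x), hsum_prom x]
      calc pairing (promotion x) w + A * (promotion x μ * ∑' a, x a)
          ≤ pairing (promotion x) w + A * (promotion x μ * 1) := by
            gcongr
            exact hx
        _ = pairing (promotion x) cnt := by rw [mul_one, ← hp_cnt (promotion x)]
        _ ≤ 1 := by rw [hp_cnt_prom x]; exact pow_le_one₀ zero_le hx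
    · rintro u' ⟨x, hx, rfl⟩
      rw [hp_v' (promotion x), hsum_prom x, hx, mul_one, ← hp_cnt (promotion x),
        hp_cnt_prom x, hx, one_pow]
  -- the two equations
  have e1 : pairing u w + A * u μ = 1 := by rw [← hp_cnt u]; exact huT cnt hv_mem
  have e2 : pairing u w + A * ∑' a : X, u (μ + {a}) = 1 := by
    rw [← hp_v' u]; exact huT v' hv'_mem
  -- `pairing u w` is finite
  have hPle : pairing u w ≤ 1 := by
    calc pairing u w ≤ pairing u cnt := by
          refine ENNReal.tsum_le_tsum fun ν => mul_le_mul_right ?_ _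
          by_cases h : ν = μ <;> simp [hw, h]
      _ = 1 := huT cnt hv_mem
  have hPne : pairing u w ≠ ∞ := (hPle.trans_lt ENNReal.one_lt_top).ne
  -- `A` is nonzero and finite
  have hA1 : (1 : ℝ≥0∞) ≤ A := by
    obtain ⟨f₀, hf₀⟩ := exists_listing' μ
    calc (1 : ℝ≥0∞) = if T f₀ = μ then 1 else 0 := by rw [if_pos]; exact hf₀
      _ ≤ A := by rw [hA, hcnt]; exact ENNReal.le_tsum f₀
  have hA0 : A ≠ 0 := (zero_lt_one.trans_le hA1).ne'
  have hAtop : A ≠ ∞ := by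
    have hfin : {f : Fin n → X | T f = μ}.Finite := fiber_finite' μ n
    have hAs : A = ∑ f ∈ hfin.toFinset, (if T f = μ then (1:ℝ≥0∞) else 0) := by
      rw [hA, hcnt]
      exact tsum_eq_sum fun f hf => if_neg (by simpa using (hfin.mem_toFinset.not.mp hf))
    rw [hAs]
    exact (ENNReal.sum_lt_top.mpr fun f _ => by split <;> simp).ne
  -- conclude by cancellation
  have hkey : A * u μ = A * ∑' a : X, u (μ + {a}) :=
    (ENNReal.add_right_inj hPne).mp (e1.trans e2.symm)
  exact (ENNReal.mul_right_inj hA0 hAtop).mp hkey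

end
end

section
/- Let L be a limit cone (L, g_i : L → D_i) over a diagram D of cones (ℝ≥0-semimodule cones with norms, with morphisms linear, ω-continuous, 1-bounded maps). Then: (1) for all x, y ∈ L, if g_i(x) = g_i(y) for all i then x = y; (2) for every x ∈ L, ‖x‖ = sup_i ‖g_i(x)‖. -/
open scoped NNReal

noncomputable section

/-- A cone in the sense of Ehrhard–Geoffroy: an `ℝ≥0`-semimodule with cancellation and
positivity, equipped with a homogeneous, separating, subadditive, monotone and
ω-continuous norm.  The order is `x ≤ y` iff `∃ x', x + x' = y`. -/
structure PCone : Type 1 where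
  carrier : Type
  add : carrier → carrier → carrier
  smul : ℝ≥0 → carrier → carrier
  zero : carrier
  norm : carrier → ℝ≥0
  add_comm : ∀ x y, add x y = add y x
  add_assoc : ∀ x y z, add (add x y) z = add x (add y z)
  zero_add : ∀ x, add zero x = x
  one_smul : ∀ x, smul 1 x = x
  mul_smul : ∀ a b x, smul (a * b) x = smul a (smul b x)
  smul_add : ∀ a x y, smul a (add x y) = add (smul a x) (smul a y)
  add_smul : ∀ a b x, smul (a + b) x = add (smul a x) (smul b x)
  smul_zero : ∀ a, smul a zero = zero
  zero_smul : ∀ x, smul 0 x = zero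
  cancel : ∀ x y z, add x z = add y z → x = y
  positivity : ∀ x y, add x y = zero → x = zero
  norm_smul : ∀ a x, norm (smul a x) = a * norm x
  norm_sep : ∀ x, norm x = 0 → x = zero
  norm_triangle : ∀ x y, norm (add x y) ≤ norm x + norm y
  norm_pos : ∀ x y, norm x ≤ norm (add x y)
  norm_omega : ∀ (s : ℕ → carrier) (x : carrier),
    (∀ n, ∃ c, add (s n) c = s (n + 1)) →
    ((∀ n, ∃ c, add (s n) c = x) ∧
      ∀ y, (∀ n, ∃ c, add (s n) c = y) → ∃ c, add x c = y) →
    norm x = ⨆ n, norm (s n)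

/-- The order `x ≤ y ↔ ∃ c, x + c = y` on a cone. -/
def PCone.le (P : PCone) (x y : P.carrier) : Prop := ∃ c, P.add x c = y

/-- `x` is the least upper bound of the ω-chain `s`. -/
def PCone.isLub (P : PCone) (s : ℕ → P.carrier) (x : P.carrier) : Prop :=
  (∀ n, P.le (s n) x) ∧ ∀ y, (∀ n, P.le (s n) y) → P.le x y

/-- Morphisms of cones: linear, ω-continuous, and sending the unit ball into the
unit ball. -/
structure IsConeHom (P Q : PCone) (f : P.carrier → Q.carrier) : Prop where
  map_add : ∀ x y, f (P.add x y) = Q.add (f x) (f y)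
  map_smul : ∀ a x, f (P.smul a x) = Q.smul a (f x)
  omega_cont : ∀ (s : ℕ → P.carrier) (x : P.carrier),
    (∀ n, P.le (s n) (s (n + 1))) → P.isLub s x → Q.isLub (fun n => f (s n)) (f x)
  bounded : ∀ x, P.norm x ≤ 1 → Q.norm (f x) ≤ 1

namespace StmtAux

lemma hom_zero {P Q : PCone} {f : P.carrier → Q.carrier} (h : IsConeHom P Q f) :
    f P.zero = Q.zero := by
  have h1 := h.map_smul 0 P.zero
  rw [P.zero_smul, Q.zero_smul] at h1
  exact h1

lemma norm_zero (P : PCone) : P.norm P.zero = 0 := by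
  have h1 := P.norm_smul 0 P.zero
  rw [P.zero_smul] at h1
  simpa using h1

lemma hom_norm_le {P Q : PCone} {f : P.carrier → Q.carrier} (h : IsConeHom P Q f)
    (x : P.carrier) : Q.norm (f x) ≤ P.norm x := by
  rcases eq_zero_or_pos (P.norm x) with h0 | hpos
  · rw [h0, P.norm_sep x h0, hom_zero h, norm_zero]
  · have h1 : P.norm (P.smul (P.norm x)⁻¹ x) ≤ 1 := by
      rw [P.norm_smul, inv_mul_cancel₀ hpos.ne']
    have h2 := h.bounded _ h1
    rw [h.map_smul, Q.norm_smul] at h2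
    calc Q.norm (f x) = P.norm x * ((P.norm x)⁻¹ * Q.norm (f x)) := by
          rw [← mul_assoc, mul_inv_cancel₀ hpos.ne', one_mul]
      _ ≤ P.norm x * 1 := mul_le_mul_right h2 _
      _ = P.norm x := mul_one _

lemma hom_comp {P Q R : PCone} {f : P.carrier → Q.carrier} {k : Q.carrier → R.carrier}
    (hf : IsConeHom P Q f) (hk : IsConeHom Q R k) :
    IsConeHom P R (fun x => k (f x)) where
  map_add x y := by rw [hf.map_add, hk.map_add]
  map_smul a x := by rw [hf.map_smul, hk.map_smul]
  omega_cont s x hc hl := by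
    have hc' : ∀ n, Q.le (f (s n)) (f (s (n + 1))) := fun n => by
      obtain ⟨c, hcn⟩ := hc n
      exact ⟨f c, by rw [← hf.map_add, hcn]⟩
    exact hk.omega_cont _ _ hc' (hf.omega_cont s x hc hl)
  bounded x hx := hk.bounded _ (hf.bounded x hx)

lemma iSup_swap {ι : Type} (f : ι → ℕ → ℝ≥0) (B : ℝ≥0) (hB : ∀ i n, f i n ≤ B) :
    ⨆ i, ⨆ n, f i n = ⨆ n, ⨆ i, f i n := by
  have bdd1 : ∀ i, BddAbove (Set.range (f i)) := fun i =>
    ⟨B, by rintro _ ⟨n, rfl⟩; exact hB i n⟩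
  have bdd2 : ∀ n, BddAbove (Set.range fun i => f i n) := fun n =>
    ⟨B, by rintro _ ⟨i, rfl⟩; exact hB i n⟩
  have bddA : BddAbove (Set.range fun n => ⨆ i, f i n) :=
    ⟨B, by rintro _ ⟨n, rfl⟩; exact ciSup_le' fun i => hB i n⟩
  have bddB : BddAbove (Set.range fun i => ⨆ n, f i n) :=
    ⟨B, by rintro _ ⟨i, rfl⟩; exact ciSup_le' fun n => hB i n⟩
  apply le_antisymm
  · exact ciSup_le' fun i => ciSup_le' fun n =>
      le_trans (le_ciSup (bdd2 n) i) (le_ciSup bddA n)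
  · exact ciSup_le' fun n => ciSup_le' fun i =>
      le_trans (le_ciSup (bdd1 i) n) (le_ciSup bddB i)

/-! ### The test cone `S` -/

def SCc : Type := {p : ℝ≥0 × ℝ≥0 // p.1 = 0 → p.2 = 0}

def SCadd (a b : SCc) : SCc :=
  ⟨(a.1.1 + b.1.1, a.1.2 + b.1.2), fun h => by
    rcases add_eq_zero.mp h with ⟨h1, h2⟩
    rw [a.2 h1, b.2 h2, add_zero]⟩

def SCsmul (t : ℝ≥0) (a : SCc) : SCc :=
  ⟨(t * a.1.1, t * a.1.2), fun h => by
    rcases mul_eq_zero.mp h with h0 | h0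
    · rw [h0]; simp
    · rw [a.2 h0, mul_zero]⟩

def SCzero : SCc := ⟨(0, 0), fun _ => rfl⟩

lemma SCext {a b : SCc} (h1 : a.1.1 = b.1.1) (h2 : a.1.2 = b.1.2) : a = b :=
  Subtype.ext (Prod.ext h1 h2)

/-- Any ω-chain in `S` that has a lub is eventually equal to that lub. -/
lemma SC_flat (s : ℕ → SCc) (u : SCc)
    (hub : ∀ n, ∃ c, SCadd (s n) c = u)
    (hleast : ∀ y, (∀ n, ∃ c, SCadd (s n) c = y) → ∃ c, SCadd u c = y) :
    ∃ N, s N = u := by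
  by_contra hne
  push_neg at hne
  have key : ∀ n, ∃ c : SCc, SCadd (s n) c = u ∧ 0 < c.1.1 := by
    intro n
    obtain ⟨c, hc⟩ := hub n
    refine ⟨c, hc, ?_⟩
    rcases eq_zero_or_pos c.1.1 with h0 | h; swap
    · exact h
    exfalso
    apply hne n
    have hc1 : (s n).1.1 + c.1.1 = u.1.1 := congrArg (fun z : SCc => z.1.1) hc
    have hc2 : (s n).1.2 + c.1.2 = u.1.2 := congrArg (fun z : SCc => z.1.2) hc
    rw [h0, add_zero] at hc1
    rw [c.2 h0, add_zero] at hc2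
    exact SCext hc1 hc2
  have hu1 : u.1.1 ≠ 0 := by
    obtain ⟨c, hc, hcpos⟩ := key 0
    have hc1 : (s 0).1.1 + c.1.1 = u.1.1 := congrArg (fun z : SCc => z.1.1) hc
    intro h0
    rw [h0] at hc1
    rcases add_eq_zero.mp hc1 with ⟨_, h2⟩
    exact hcpos.ne' h2
  set u' : SCc := ⟨(u.1.1, u.1.2 + 1), fun h => absurd h hu1⟩ with hu'
  have hub' : ∀ n, ∃ c, SCadd (s n) c = u' := by
    intro n
    obtain ⟨c, hc, hcpos⟩ := key n
    have hc1 : (s n).1.1 + c.1.1 = u.1.1 := congrArg (fun z : SCc => z.1.1) hc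
    have hc2 : (s n).1.2 + c.1.2 = u.1.2 := congrArg (fun z : SCc => z.1.2) hc
    refine ⟨⟨(c.1.1, c.1.2 + 1), fun h => absurd h hcpos.ne'⟩, SCext ?_ ?_⟩
    · exact hc1
    · show (s n).1.2 + (c.1.2 + 1) = u.1.2 + 1
      rw [← add_assoc, hc2]
  obtain ⟨d, hd⟩ := hleast u' hub'
  have hd1 : u.1.1 + d.1.1 = u.1.1 := congrArg (fun z : SCc => z.1.1) hd
  have hd0 : d.1.1 = 0 := by
    have := hd1.trans (add_zero u.1.1).symm
    exact add_left_cancel this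
  have hd2 : u.1.2 + d.1.2 = u.1.2 + 1 := congrArg (fun z : SCc => z.1.2) hd
  rw [d.2 hd0] at hd2
  have : (0 : ℝ≥0) = 1 := add_left_cancel hd2
  exact zero_ne_one this

def SC (β : ℝ≥0) : PCone where
  carrier := SCc
  add := SCadd
  smul := SCsmul
  zero := SCzero
  norm a := (a.1.1 + a.1.2) * (β ⊔ 1)
  add_comm a b := SCext (add_comm _ _) (add_comm _ _)
  add_assoc a b c := SCext (add_assoc _ _ _) (add_assoc _ _ _)
  zero_add a := SCext (zero_add _) (zero_add _)
  one_smul a := SCext (one_mul _) (one_mul _)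
  mul_smul a b x := SCext (mul_assoc _ _ _) (mul_assoc _ _ _)
  smul_add a x y := SCext (mul_add _ _ _) (mul_add _ _ _)
  add_smul a b x := SCext (add_mul _ _ _) (add_mul _ _ _)
  smul_zero a := SCext (mul_zero _) (mul_zero _)
  zero_smul x := SCext (zero_mul _) (zero_mul _)
  cancel x y z h := by
    have h1 : x.1.1 + z.1.1 = y.1.1 + z.1.1 := congrArg (fun w : SCc => w.1.1) h
    have h2 : x.1.2 + z.1.2 = y.1.2 + z.1.2 := congrArg (fun w : SCc => w.1.2) h
    exact SCext (add_right_cancel h1) (add_right_cancel h2)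
  positivity x y h := by
    have h1 : x.1.1 + y.1.1 = 0 := congrArg (fun w : SCc => w.1.1) h
    have h2 : x.1.2 + y.1.2 = 0 := congrArg (fun w : SCc => w.1.2) h
    exact SCext (add_eq_zero.mp h1).1 (add_eq_zero.mp h2).1
  norm_smul a x := by
    show (a * x.1.1 + a * x.1.2) * (β ⊔ 1) = a * ((x.1.1 + x.1.2) * (β ⊔ 1))
    ring
  norm_sep x h := by
    have hb : (β ⊔ 1) ≠ 0 := by
      intro h0
      have : (1 : ℝ≥0) ≤ 0 := h0 ▸ le_sup_right
      simp at this
    rcases mul_eq_zero.mp h with h0 | h0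
    · rcases add_eq_zero.mp h0 with ⟨h1, h2⟩
      exact SCext h1 h2
    · exact absurd h0 hb
  norm_triangle x y := by
    show (x.1.1 + y.1.1 + (x.1.2 + y.1.2)) * (β ⊔ 1) ≤
      (x.1.1 + x.1.2) * (β ⊔ 1) + (y.1.1 + y.1.2) * (β ⊔ 1)
    rw [← add_mul]
    apply mul_le_mul_left
    rw [add_add_add_comm]
  norm_pos x y := by
    show (x.1.1 + x.1.2) * (β ⊔ 1) ≤ (x.1.1 + y.1.1 + (x.1.2 + y.1.2)) * (β ⊔ 1)
    apply mul_le_mul_left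
    rw [add_add_add_comm]
    exact le_add_right le_rfl
  norm_omega s u hchain hlub := by
    obtain ⟨N, hN⟩ := SC_flat s u hlub.1 hlub.2
    have hle : ∀ n, ((s n).1.1 + (s n).1.2) * (β ⊔ 1) ≤ ((u.1.1 + u.1.2)) * (β ⊔ 1) := by
      intro n
      obtain ⟨c, hc⟩ := hlub.1 n
      have hc1 : (s n).1.1 + c.1.1 = u.1.1 := congrArg (fun z : SCc => z.1.1) hc
      have hc2 : (s n).1.2 + c.1.2 = u.1.2 := congrArg (fun z : SCc => z.1.2) hc
      apply mul_le_mul_left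
      rw [← hc1, ← hc2, add_add_add_comm]
      exact le_add_right le_rfl
    refine le_antisymm ?_ (ciSup_le' hle)
    have h2 := le_ciSup (f := fun n => ((s n).1.1 + (s n).1.2) * (β ⊔ 1))
      ⟨((u.1.1 + u.1.2)) * (β ⊔ 1), by rintro _ ⟨n, rfl⟩; exact hle n⟩ N
    rw [hN] at h2
    exact h2

lemma SC_lub {β : ℝ≥0} (s : ℕ → (SC β).carrier) (u : (SC β).carrier)
    (hl : (SC β).isLub s u) : ∃ N, s N = u :=
  SC_flat s u hl.1 hl.2

lemma hom_of_flat {P Q : PCone} {f : P.carrier → Q.carrier}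
    (hP : ∀ (s : ℕ → P.carrier) (u : P.carrier), P.isLub s u → ∃ N, s N = u)
    (hadd : ∀ a b, f (P.add a b) = Q.add (f a) (f b))
    (hsmul : ∀ a x, f (P.smul a x) = Q.smul a (f x))
    (hbdd : ∀ x, P.norm x ≤ 1 → Q.norm (f x) ≤ 1) : IsConeHom P Q f where
  map_add := hadd
  map_smul := hsmul
  bounded := hbdd
  omega_cont s u _ hl := by
    obtain ⟨N, hN⟩ := hP s u hl
    refine ⟨fun n => ?_, fun z hz => ?_⟩
    · obtain ⟨c, hcn⟩ := hl.1 n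
      exact ⟨f c, by rw [← hadd, hcn]⟩
    · have h2 : Q.le (f (s N)) z := hz N
      rw [hN] at h2
      exact h2

lemma add4 (P : PCone) (a b c d : P.carrier) :
    P.add (P.add a b) (P.add c d) = P.add (P.add a c) (P.add b d) := by
  rw [P.add_assoc, P.add_assoc]
  congr 1
  rw [← P.add_assoc, ← P.add_assoc, P.add_comm b c]

lemma pairHom (β : ℝ≥0) (L : PCone) (x y : L.carrier)
    (hx : L.norm x ≤ β ⊔ 1) (hy : L.norm y ≤ β ⊔ 1) :
    IsConeHom (SC β) L (fun p => L.add (L.smul p.1.1 x) (L.smul p.1.2 y)) := by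
  apply hom_of_flat SC_lub
  · intro a b
    show L.add (L.smul (a.1.1 + b.1.1) x) (L.smul (a.1.2 + b.1.2) y) = _
    rw [L.add_smul, L.add_smul, add4]
  · intro t a
    show L.add (L.smul (t * a.1.1) x) (L.smul (t * a.1.2) y) = _
    rw [L.smul_add, ← L.mul_smul, ← L.mul_smul]
  · intro p hp
    calc L.norm (L.add (L.smul p.1.1 x) (L.smul p.1.2 y))
        ≤ L.norm (L.smul p.1.1 x) + L.norm (L.smul p.1.2 y) := L.norm_triangle _ _
      _ = p.1.1 * L.norm x + p.1.2 * L.norm y := by rw [L.norm_smul, L.norm_smul]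
      _ ≤ p.1.1 * (β ⊔ 1) + p.1.2 * (β ⊔ 1) :=
          add_le_add (mul_le_mul_right hx _) (mul_le_mul_right hy _)
      _ = (p.1.1 + p.1.2) * (β ⊔ 1) := (add_mul _ _ _).symm
      _ ≤ 1 := hp

end StmtAux

namespace StmtAux

def supCone {J : Type} (D : J → PCone) (L : PCone) (g : ∀ i : J, L.carrier → (D i).carrier)
    (hg : ∀ i, IsConeHom L (D i) (g i))
    (hsep : ∀ z : L.carrier, (∀ i, g i z = (D i).zero) → z = L.zero) : PCone where
  carrier := L.carrier
  add := L.add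
  smul := L.smul
  zero := L.zero
  norm z := ⨆ i, (D i).norm (g i z)
  add_comm := L.add_comm
  add_assoc := L.add_assoc
  zero_add := L.zero_add
  one_smul := L.one_smul
  mul_smul := L.mul_smul
  smul_add := L.smul_add
  add_smul := L.add_smul
  smul_zero := L.smul_zero
  zero_smul := L.zero_smul
  cancel := L.cancel
  positivity := L.positivity
  norm_smul a z := by
    show (⨆ i, (D i).norm (g i (L.smul a z))) = a * ⨆ i, (D i).norm (g i z)
    have h1 : ∀ i, (D i).norm (g i (L.smul a z)) = a * (D i).norm (g i z) := fun i => by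
      rw [(hg i).map_smul, (D i).norm_smul]
    rw [iSup_congr h1]
    exact (NNReal.mul_iSup _ _).symm
  norm_sep z h0 := by
    apply hsep
    intro i
    apply (D i).norm_sep
    apply le_antisymm _ zero_le
    rw [← h0]
    exact le_ciSup ⟨L.norm z, by rintro _ ⟨i, rfl⟩; exact hom_norm_le (hg i) z⟩ i
  norm_triangle x y := by
    apply ciSup_le'
    intro i
    have h1 : (D i).norm (g i (L.add x y)) ≤ (D i).norm (g i x) + (D i).norm (g i y) := by
      rw [(hg i).map_add]; exact (D i).norm_triangle _ _
    refine le_trans h1 (add_le_add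
      (le_ciSup ⟨L.norm x, by rintro _ ⟨i, rfl⟩; exact hom_norm_le (hg i) x⟩ i)
      (le_ciSup ⟨L.norm y, by rintro _ ⟨i, rfl⟩; exact hom_norm_le (hg i) y⟩ i))
  norm_pos x y := by
    apply ciSup_le'
    intro i
    have h1 : (D i).norm (g i x) ≤ (D i).norm (g i (L.add x y)) := by
      rw [(hg i).map_add]; exact (D i).norm_pos _ _
    exact le_trans h1
      (le_ciSup ⟨L.norm (L.add x y), by
        rintro _ ⟨i, rfl⟩; exact hom_norm_le (hg i) (L.add x y)⟩ i)
  norm_omega s x hchain hlub := by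
    show (⨆ i, (D i).norm (g i x)) = ⨆ n, ⨆ i, (D i).norm (g i (s n))
    have hlubs : ∀ i, (D i).norm (g i x) = ⨆ n, (D i).norm (g i (s n)) := by
      intro i
      have h1 : (D i).isLub (fun n => g i (s n)) (g i x) :=
        (hg i).omega_cont s x hchain hlub
      exact (D i).norm_omega _ _
        (fun n => by
          obtain ⟨c, hc⟩ := hchain n
          exact ⟨g i c, by rw [← (hg i).map_add, hc]⟩)
        h1
    have hBle : ∀ i n, (D i).norm (g i (s n)) ≤ L.norm x := by
      intro i n
      obtain ⟨c, hc⟩ := hlub.1 n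
      refine le_trans (hom_norm_le (hg i) (s n)) ?_
      have := L.norm_pos (s n) c
      rwa [hc] at this
    rw [iSup_congr hlubs]
    exact iSup_swap _ (L.norm x) hBle

end StmtAux

open StmtAux

/-- Given a diagram `D` of cones indexed by a (small) category `J`, for a limit cone
`(L, g)` over `D`: (1) the projections `g_i` are jointly injective, and
(2) `‖x‖ = ⨆ i ‖g_i x‖` for every `x ∈ L`. -/
theorem stmt_16 {J : Type} [CategoryTheory.Category J]
    (D : J → PCone)
    (Dmap : ∀ {i j : J}, (i ⟶ j) → (D i).carrier → (D j).carrier)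
    (hDmap : ∀ {i j : J} (f : i ⟶ j), IsConeHom (D i) (D j) (Dmap f))
    (L : PCone) (g : ∀ i : J, L.carrier → (D i).carrier)
    (hg : ∀ i, IsConeHom L (D i) (g i))
    (hcompat : ∀ {i j : J} (f : i ⟶ j) (x : L.carrier), Dmap f (g i x) = g j x)
    (hlim : ∀ (A : PCone) (c : ∀ i : J, A.carrier → (D i).carrier),
      (∀ i, IsConeHom A (D i) (c i)) →
      (∀ {i j : J} (f : i ⟶ j) (a : A.carrier), Dmap f (c i a) = c j a) →
      ∃! h : A.carrier → L.carrier,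
        IsConeHom A L h ∧ ∀ i a, g i (h a) = c i a) :
    (∀ x y : L.carrier, (∀ i, g i x = g i y) → x = y) ∧
    (∀ x : L.carrier, L.norm x = ⨆ i, (D i).norm (g i x)) := by
  -- Part (1)
  have part1 : ∀ x y : L.carrier, (∀ i, g i x = g i y) → x = y := by
    intro x y hxy
    set β := L.norm x ⊔ L.norm y with hβ
    have hx : L.norm x ≤ β ⊔ 1 := le_trans le_sup_left le_sup_left
    have hy : L.norm y ≤ β ⊔ 1 := le_trans le_sup_right le_sup_left
    have h₁ := pairHom β L x y hx hy
    have h₂ := pairHom β L y x hy hx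
    set f₁ : SCc → L.carrier := fun p => L.add (L.smul p.1.1 x) (L.smul p.1.2 y) with hf₁
    set f₂ : SCc → L.carrier := fun p => L.add (L.smul p.1.1 y) (L.smul p.1.2 x) with hf₂
    obtain ⟨h, -, huniq⟩ := hlim (SC β) (fun i p => g i (f₁ p))
      (fun i => hom_comp h₁ (hg i)) (fun m p => hcompat m (f₁ p))
    have e₁ : f₁ = h := huniq f₁ ⟨h₁, fun i p => rfl⟩
    have e₂ : f₂ = h := by
      apply huniq f₂
      refine ⟨h₂, fun i p => ?_⟩
      show g i (f₂ p) = g i (f₁ p)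
      rw [hf₁, hf₂]
      simp only []
      rw [(hg i).map_add, (hg i).map_add, (hg i).map_smul, (hg i).map_smul,
        (hg i).map_smul, (hg i).map_smul, hxy i]
    have hev := congrFun (e₁.trans e₂.symm) ⟨(1, 0), fun h => absurd h one_ne_zero⟩
    rw [hf₁, hf₂] at hev
    simp only [] at hev
    rw [L.one_smul, L.one_smul, L.zero_smul, L.zero_smul, L.add_comm x, L.add_comm y,
      L.zero_add, L.zero_add] at hev
    exact hev
  refine ⟨part1, ?_⟩
  -- Part (2)
  have hsep : ∀ z : L.carrier, (∀ i, g i z = (D i).zero) → z = L.zero := by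
    intro z hz
    exact part1 z L.zero fun i => by rw [hz i, hom_zero (hg i)]
  set A := supCone D L g hg hsep with hA
  have hAnorm : ∀ z : L.carrier, A.norm z = ⨆ i, (D i).norm (g i z) := fun _ => rfl
  have hAle : ∀ z : L.carrier, A.norm z ≤ L.norm z := fun z =>
    ciSup_le' fun i => hom_norm_le (hg i) z
  have hcA : ∀ i, IsConeHom A (D i) (g i) := by
    intro i
    refine ⟨(hg i).map_add, (hg i).map_smul, (hg i).omega_cont, fun z hz => ?_⟩
    refine le_trans ?_ hz
    exact le_ciSup ⟨L.norm z, by rintro _ ⟨i, rfl⟩; exact hom_norm_le (hg i) z⟩ i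
  obtain ⟨h, ⟨hhom, hproj⟩, -⟩ := hlim A g hcA (fun m a => hcompat m a)
  obtain ⟨h₀, -, huniq⟩ := hlim L g hg (fun m a => hcompat m a)
  have hhomL : IsConeHom L L h :=
    ⟨hhom.map_add, hhom.map_smul, hhom.omega_cont,
      fun z hz => hhom.bounded z (le_trans (hAle z) hz)⟩
  have e₁ : h = h₀ := huniq h ⟨hhomL, hproj⟩
  have e₂ : (fun a : L.carrier => a) = h₀ :=
    huniq _ ⟨⟨fun _ _ => rfl, fun _ _ => rfl, fun _ _ _ hl => hl, fun _ hz => hz⟩,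
      fun _ _ => rfl⟩
  intro x
  have hx : h x = x := by rw [e₁, ← e₂]
  apply le_antisymm
  · have h2 := hom_norm_le hhom x
    rw [hx] at h2
    exact le_trans h2 (le_of_eq (hAnorm x))
  · exact hAle x


end
end
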